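/- Consider the uniform RWRE on Z^2 in which μ(G_o = {e_2, e_1}) = p and μ(G_o = {e_2, −e_1}) = 1−p for p ∈ (0,1) (so at each site the walk steps up or right each with probability 1/2, or up or left each with probability 1/2). Then P-almost surely lim_{n→∞} n^{-1}X_n = (v^{[1]}, v^{[2]}) with v^{[1]} = (2p−1)(p²−p+6) / (6(2−p)(1+p)) and v^{[2]} = 1/2. -/

import Mathlib

open MeasureTheory Filter Set Topology
open scoped Classical ENNReal

noncomputable section

/-- Lattice sites of `ℤ^d`. -/
abbrev Site (d : ℕ) := Fin d → ℤ

/-- The `2d` unit vectors `±e_i` of `ℤ^d`, indexed by `Fin d × Bool`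
(`true` for `+e_i`, `false` for `-e_i`). -/
def stepVec (d : ℕ) (i : Fin d × Bool) : Site d :=
  if i.2 = true then Pi.single i.1 1 else -Pi.single i.1 1

/-- An element of `𝒫`: a probability measure on the set `E` of unit vectors of `ℤ^d`,
recorded via its probability mass function on lattice vectors. -/
structure EnvDist (d : ℕ) where
  prob : Site d → ℝ
  nonneg : ∀ v, 0 ≤ prob v
  support : ∀ v, prob v ≠ 0 → ∃ i, v = stepVec d i
  total : ∑ i : Fin d × Bool, prob (stepVec d i) = 1

instance {d : ℕ} : MeasurableSpace (EnvDist d) :=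
  MeasurableSpace.comap EnvDist.prob inferInstance

/-- Environments: an element of `𝒫` at every site. -/
abbrev EnvOmega (d : ℕ) := Site d → EnvDist d

/-- Path space for the walk. -/
abbrev PathSpace (d : ℕ) := ℕ → Site d

/-- Sample space for the annealed walk: environment together with path. -/
abbrev RWSpace (d : ℕ) := EnvOmega d × PathSpace d

/-- Dot product of a lattice vector with a real vector. -/
def dotR {d : ℕ} (x : Site d) (l : Fin d → ℝ) : ℝ := ∑ i, (x i : ℝ) * l i

/-- Dot product of two lattice vectors. -/
def dotZ {d : ℕ} (x y : Site d) : ℤ := ∑ i, x i * y i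

/-- Quenched probability that the walk follows the steps of `x` for its first `n` steps. -/
def pathWeight {d : ℕ} (ω : EnvOmega d) (n : ℕ) (x : ℕ → Site d) : ℝ :=
  ∏ k ∈ Finset.range n, (ω (x k)).prob (x (k + 1) - x k)

/-- `ν` is the product measure `μ^{⊗ℤ^d}`, i.e. the coordinates are i.i.d. with law `μ`. -/
def IsIIDEnv {d : ℕ} (μ : Measure (EnvDist d)) (ν : Measure (EnvOmega d)) : Prop :=
  IsProbabilityMeasure μ ∧ IsProbabilityMeasure ν ∧
    ∀ (s : Finset (Site d)) (A : Site d → Set (EnvDist d)),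
      (∀ x ∈ s, MeasurableSet (A x)) →
      ν {ω | ∀ x ∈ s, ω x ∈ A x} = ∏ x ∈ s, μ (A x)

/-- `P` is the annealed law of the RWRE started at the origin in an i.i.d. environment
with marginal `μ`: the environment marginal is the i.i.d. product, and the cylinder
probabilities are given by averaging the quenched Markov-chain probabilities. -/
def IsRWRE {d : ℕ} (μ : Measure (EnvDist d)) (P : Measure (RWSpace d)) : Prop :=
  IsProbabilityMeasure P ∧ IsIIDEnv μ (P.map Prod.fst) ∧
    ∀ (n : ℕ) (x : ℕ → Site d) (A : Set (EnvOmega d)), MeasurableSet A →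
      (P {q | q.1 ∈ A ∧ ∀ k ≤ n, q.2 k = x k}).toReal =
        (if x 0 = 0 then (1 : ℝ) else 0) * ∫ ω in A, pathWeight ω n x ∂(P.map Prod.fst)

/-- `Q` is the quenched law `ℙ_ω` of the walk in the fixed environment `ω`, started at the
origin. -/
def IsQuenchedRW {d : ℕ} (ω : EnvOmega d) (Q : Measure (PathSpace d)) : Prop :=
  IsProbabilityMeasure Q ∧
    ∀ (n : ℕ) (x : ℕ → Site d),
      (Q {w | ∀ k ≤ n, w k = x k}).toReal =
        (if x 0 = 0 then (1 : ℝ) else 0) * pathWeight ω n x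

/-- `x → y`: there is a directed path from `x` to `y` in the graph `G(ω)`. -/
def Reaches {d : ℕ} (ω : EnvOmega d) : Site d → Site d → Prop :=
  Relation.ReflTransGen (fun a b => 0 < (ω a).prob (b - a))

/-- The forward cluster `C_x`. -/
def clusterC {d : ℕ} (ω : EnvOmega d) (x : Site d) : Set (Site d) := {y | Reaches ω x y}

/-- The mutually connected cluster `M_x = C_x ∩ B_x`. -/
def clusterM {d : ℕ} (ω : EnvOmega d) (x : Site d) : Set (Site d) :=
  {y | Reaches ω x y ∧ Reaches ω y x}

/-- The local drift `u = ∑_e γ(e) e` of an environment value `γ`. -/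
def drift {d : ℕ} (γ : EnvDist d) : Fin d → ℝ :=
  fun i => ∑ k : Fin d × Bool, γ.prob (stepVec d k) * ((stepVec d k i : ℤ) : ℝ)

/-- `N_n`: the number of times before time `n` at which the walk sits on a site whose
environment equals `γ`. -/
def envCount {d : ℕ} (γ : EnvDist d) (q : RWSpace d) (n : ℕ) : ℕ :=
  Set.ncard {m : ℕ | m < n ∧ q.1 (q.2 m) = γ}

end

noncomputable section
namespace S19


inductive Letter | u | r | l
deriving DecidableEq

instance : Fintype Letter :=
  ⟨{.u, .r, .l}, by intro x; cases x <;> decide⟩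

def vec : Letter → Site 2
  | .u => Pi.single 1 1
  | .r => Pi.single 0 1
  | .l => -Pi.single 0 1

def e1 : Site 2 := Pi.single 0 1

@[simp] lemma vec_u_0 : vec .u 0 = 0 := by simp [vec, Pi.single_apply]
@[simp] lemma vec_u_1 : vec .u 1 = 1 := by simp [vec]
@[simp] lemma vec_r_0 : vec .r 0 = 1 := by simp [vec]
@[simp] lemma vec_r_1 : vec .r 1 = 0 := by simp [vec, Pi.single_apply]
@[simp] lemma vec_l_0 : vec .l 0 = -1 := by simp [vec]
@[simp] lemma vec_l_1 : vec .l 1 = 0 := by simp [vec, Pi.single_apply]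
@[simp] lemma e1_0 : e1 0 = 1 := by simp [e1]
@[simp] lemma e1_1 : e1 1 = 0 := by simp [e1, Pi.single_apply]

inductive St | e | a | b | c | d
deriving DecidableEq

def tr : St → Letter → St
  | _, .u => .e
  | .e, .r => .a
  | .e, .l => .b
  | .a, .r => .a
  | .a, .l => .c
  | .b, .r => .d
  | .b, .l => .b
  | .c, .r => .d
  | .c, .l => .c
  | .d, .r => .d
  | .d, .l => .c

def kap (p : ℝ) : St → Letter → ℝ
  | _, .u => 1/2
  | .e, .r => p/2
  | .a, .r => p/2
  | .b, .r => p/2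
  | .e, .l => (1-p)/2
  | .a, .l => (1-p)/2
  | .b, .l => (1-p)/2
  | .c, .r => 1/2
  | .c, .l => 0
  | .d, .r => 0
  | .d, .l => 1/2

variable (g : ℕ → Letter)

def wpos : ℕ → Site 2
  | 0 => 0
  | n + 1 => wpos n + vec (g n)

def wst : ℕ → St
  | 0 => .e
  | n + 1 => tr (wst n) (g n)

def wwt (p : ℝ) : ℕ → ℝ
  | 0 => 1
  | n + 1 => wwt p n * kap p (wst g n) (g n)

def wsR : ℕ → Finset (Site 2)
  | 0 => ∅
  | n + 1 => if g n = .r then insert (wpos g n) (wsR n) else wsR n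

def wsL : ℕ → Finset (Site 2)
  | 0 => ∅
  | n + 1 => if g n = .l then insert (wpos g n) (wsL n) else wsL n

lemma mem_wsR (z : Site 2) : ∀ n, z ∈ wsR g n ↔ ∃ k < n, g k = .r ∧ wpos g k = z := by
  intro n
  induction n with
  | zero => simp [wsR]
  | succ n ih =>
    by_cases h : g n = .r
    · simp only [wsR, if_pos h, Finset.mem_insert, ih]
      constructor
      · rintro (rfl | ⟨k, hk, h1, h2⟩)
        · exact ⟨n, Nat.lt_succ_self n, h, rfl⟩
        · exact ⟨k, hk.trans (Nat.lt_succ_self n), h1, h2⟩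
      · rintro ⟨k, hk, h1, h2⟩
        rcases Nat.lt_succ_iff_lt_or_eq.mp hk with hk' | rfl
        · exact Or.inr ⟨k, hk', h1, h2⟩
        · exact Or.inl h2.symm
    · simp only [wsR, if_neg h, ih]
      constructor
      · rintro ⟨k, hk, h1, h2⟩; exact ⟨k, hk.trans (Nat.lt_succ_self n), h1, h2⟩
      · rintro ⟨k, hk, h1, h2⟩
        rcases Nat.lt_succ_iff_lt_or_eq.mp hk with hk' | rfl
        · exact ⟨k, hk', h1, h2⟩
        · exact absurd h1 h
  
lemma mem_wsL (z : Site 2) : ∀ n, z ∈ wsL g n ↔ ∃ k < n, g k = .l ∧ wpos g k = z := by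
  intro n
  induction n with
  | zero => simp [wsL]
  | succ n ih =>
    by_cases h : g n = .l
    · simp only [wsL, if_pos h, Finset.mem_insert, ih]
      constructor
      · rintro (rfl | ⟨k, hk, h1, h2⟩)
        · exact ⟨n, Nat.lt_succ_self n, h, rfl⟩
        · exact ⟨k, hk.trans (Nat.lt_succ_self n), h1, h2⟩
      · rintro ⟨k, hk, h1, h2⟩
        rcases Nat.lt_succ_iff_lt_or_eq.mp hk with hk' | rfl
        · exact Or.inr ⟨k, hk', h1, h2⟩
        · exact Or.inl h2.symm
    · simp only [wsL, if_neg h, ih]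
      constructor
      · rintro ⟨k, hk, h1, h2⟩; exact ⟨k, hk.trans (Nat.lt_succ_self n), h1, h2⟩
      · rintro ⟨k, hk, h1, h2⟩
        rcases Nat.lt_succ_iff_lt_or_eq.mp hk with hk' | rfl
        · exact ⟨k, hk', h1, h2⟩
        · exact absurd h1 h

/-- The record invariant relating the automaton state to the exit records. -/
def Inv (n : ℕ) : Prop :=
  (∀ z ∈ wsR g n ∪ wsL g n, z 1 ≤ wpos g n 1) ∧
  (wst g n = .e → ∀ z ∈ wsR g n ∪ wsL g n, z 1 ≠ wpos g n 1) ∧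
  (wst g n = .a → (wpos g n - e1 ∈ wsR g n) ∧
      (∀ z ∈ wsR g n, z 1 = wpos g n 1 → z 0 < wpos g n 0) ∧
      (∀ z ∈ wsL g n, z 1 ≠ wpos g n 1)) ∧
  (wst g n = .b → (wpos g n + e1 ∈ wsL g n) ∧
      (∀ z ∈ wsL g n, z 1 = wpos g n 1 → wpos g n 0 < z 0) ∧
      (∀ z ∈ wsR g n, z 1 ≠ wpos g n 1)) ∧
  (wst g n = .c → wpos g n ∈ wsR g n ∧ wpos g n + e1 ∈ wsL g n) ∧
  (wst g n = .d → wpos g n ∈ wsL g n ∧ wpos g n - e1 ∈ wsR g n)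

lemma kap_u (p : ℝ) (s : St) : kap p s .u = 1/2 := by cases s <;> rfl
lemma tr_u (s : St) : tr s .u = .e := by cases s <;> rfl

lemma wsR_succ (n : ℕ) : wsR g (n+1) = if g n = .r then insert (wpos g n) (wsR g n) else wsR g n := rfl
lemma wsL_succ (n : ℕ) : wsL g (n+1) = if g n = .l then insert (wpos g n) (wsL g n) else wsL g n := rfl
lemma wwt_succ (p : ℝ) (n : ℕ) : wwt g p (n+1) = wwt g p n * kap p (wst g n) (g n) := rfl
lemma wst_succ (n : ℕ) : wst g (n+1) = tr (wst g n) (g n) := rfl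
lemma wpos_succ (n : ℕ) : wpos g (n+1) = wpos g n + vec (g n) := rfl

lemma wsR_mono (n : ℕ) : wsR g n ⊆ wsR g (n+1) := by
  rw [wsR_succ]; split
  · exact Finset.subset_insert _ _
  · exact subset_rfl

lemma wsL_mono (n : ℕ) : wsL g n ⊆ wsL g (n+1) := by
  rw [wsL_succ]; split
  · exact Finset.subset_insert _ _
  · exact subset_rfl

lemma main_induction (p : ℝ) :
    ∀ n, (Disjoint (wsR g n) (wsL g n) →
        wwt g p n = (1/2)^n * p^((wsR g n).card) * (1-p)^((wsL g n).card) ∧ Inv g n)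
      ∧ (¬ Disjoint (wsR g n) (wsL g n) → wwt g p n = 0) := by
  intro n
  induction n with
  | zero =>
    constructor
    · intro _
      refine ⟨by simp [wwt, wsR, wsL], ?_, ?_, ?_, ?_, ?_, ?_⟩
      · simp [wsR, wsL]
      · intro _; simp [wsR, wsL]
      · intro h; exact absurd h (by simp [wst])
      · intro h; exact absurd h (by simp [wst])
      · intro h; exact absurd h (by simp [wst])
      · intro h; exact absurd h (by simp [wst])
    · intro h; exact absurd (by simp [wsR, wsL] : Disjoint (wsR g 0) (wsL g 0)) h
  | succ n ih =>
    obtain ⟨ih1, ih2⟩ := ih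
    by_cases hD : Disjoint (wsR g n) (wsL g n)
    · obtain ⟨hwt, hGlob, hIe, hIa, hIb, hIc, hId⟩ := ih1 hD
      cases hl : g n with
      | u =>
        have hR' : wsR g (n+1) = wsR g n := by rw [wsR_succ, if_neg (by simp [hl])]
        have hL' : wsL g (n+1) = wsL g n := by rw [wsL_succ, if_neg (by simp [hl])]
        have hp' : wpos g (n+1) = wpos g n + vec .u := by rw [wpos_succ, hl]
        have hst' : wst g (n+1) = .e := by rw [wst_succ, hl, tr_u]
        have hrow1 : wpos g (n+1) 1 = wpos g n 1 + 1 := by rw [hp']; simp [Pi.add_apply]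
        constructor
        · intro _
          refine ⟨?_, ?_, ?_, ?_, ?_, ?_, ?_⟩
          · rw [wwt_succ, hwt, hl, kap_u, hR', hL', pow_succ]; ring
          · intro z hz; rw [hR', hL'] at hz; have := hGlob z hz; omega
          · intro _ z hz; rw [hR', hL'] at hz; have := hGlob z hz; omega
          · intro h; rw [hst'] at h; cases h
          · intro h; rw [hst'] at h; cases h
          · intro h; rw [hst'] at h; cases h
          · intro h; rw [hst'] at h; cases h
        · intro h; rw [hR', hL'] at h; exact absurd hD h
      | r =>
        have hL' : wsL g (n+1) = wsL g n := by rw [wsL_succ, if_neg (by simp [hl])]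
        have hR' : wsR g (n+1) = insert (wpos g n) (wsR g n) := by rw [wsR_succ, if_pos hl]
        have hp' : wpos g (n+1) = wpos g n + e1 := by rw [wpos_succ, hl]; rfl
        have hrow1 : wpos g (n+1) 1 = wpos g n 1 := by rw [hp']; simp [Pi.add_apply]
        have hcol1 : wpos g (n+1) 0 = wpos g n 0 + 1 := by rw [hp']; simp [Pi.add_apply]
        have hback : wpos g (n+1) - e1 = wpos g n := by rw [hp', add_sub_cancel_right]
        cases hst : wst g n with
        | e =>
          have hIe' := hIe hst
          have hfR : wpos g n ∉ wsR g n := fun hm => hIe' _ (Finset.mem_union_left _ hm) rfl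
          have hfL : wpos g n ∉ wsL g n := fun hm => hIe' _ (Finset.mem_union_right _ hm) rfl
          have hst' : wst g (n+1) = .a := by rw [wst_succ, hl, hst]; rfl
          have hD' : Disjoint (wsR g (n+1)) (wsL g (n+1)) := by
            rw [hR', hL']; exact Finset.disjoint_insert_left.mpr ⟨hfL, hD⟩
          refine ⟨fun _ => ⟨?_, ?_, ?_, ?_, ?_, ?_, ?_⟩, fun h => absurd hD' h⟩
          · rw [wwt_succ, hwt, hst, hl, hR', hL', Finset.card_insert_of_notMem hfR,
              pow_succ, pow_succ]
            show _ = _; simp only [kap]; ring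
          · intro z hz; rw [hR', hL'] at hz; rw [hrow1]
            rcases Finset.mem_union.mp hz with hz' | hz'
            · rcases Finset.mem_insert.mp hz' with rfl | hz''
              · exact le_refl _
              · exact hGlob z (Finset.mem_union_left _ hz'')
            · exact hGlob z (Finset.mem_union_right _ hz')
          · intro h; rw [hst'] at h; cases h
          · intro _
            refine ⟨?_, ?_, ?_⟩
            · rw [hback, hR']; exact Finset.mem_insert_self _ _
            · intro z hz hzr; rw [hR'] at hz; rw [hcol1]
              rcases Finset.mem_insert.mp hz with rfl | hz'
              · omega
              · exact absurd (hzr.trans hrow1) (hIe' z (Finset.mem_union_left _ hz'))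
            · intro z hz; rw [hL'] at hz; rw [hrow1]
              exact hIe' z (Finset.mem_union_right _ hz)
          · intro h; rw [hst'] at h; cases h
          · intro h; rw [hst'] at h; cases h
          · intro h; rw [hst'] at h; cases h
        | a =>
          obtain ⟨hmR, hcols, hLrow⟩ := hIa hst
          have hfR : wpos g n ∉ wsR g n := fun hm => lt_irrefl _ (hcols _ hm rfl)
          have hfL : wpos g n ∉ wsL g n := fun hm => hLrow _ hm rfl
          have hst' : wst g (n+1) = .a := by rw [wst_succ, hl, hst]; rfl
          have hD' : Disjoint (wsR g (n+1)) (wsL g (n+1)) := by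
            rw [hR', hL']; exact Finset.disjoint_insert_left.mpr ⟨hfL, hD⟩
          refine ⟨fun _ => ⟨?_, ?_, ?_, ?_, ?_, ?_, ?_⟩, fun h => absurd hD' h⟩
          · rw [wwt_succ, hwt, hst, hl, hR', hL', Finset.card_insert_of_notMem hfR,
              pow_succ, pow_succ]
            simp only [kap]; ring
          · intro z hz; rw [hR', hL'] at hz; rw [hrow1]
            rcases Finset.mem_union.mp hz with hz' | hz'
            · rcases Finset.mem_insert.mp hz' with rfl | hz''
              · exact le_refl _
              · exact hGlob z (Finset.mem_union_left _ hz'')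
            · exact hGlob z (Finset.mem_union_right _ hz')
          · intro h; rw [hst'] at h; cases h
          · intro _
            refine ⟨?_, ?_, ?_⟩
            · rw [hback, hR']; exact Finset.mem_insert_self _ _
            · intro z hz hzr; rw [hR'] at hz; rw [hcol1]
              rcases Finset.mem_insert.mp hz with rfl | hz'
              · omega
              · have := hcols z hz' (hzr.trans hrow1); omega
            · intro z hz; rw [hL'] at hz; rw [hrow1]
              exact hLrow z hz
          · intro h; rw [hst'] at h; cases h
          · intro h; rw [hst'] at h; cases h
          · intro h; rw [hst'] at h; cases h
        | b =>
          obtain ⟨hmL, hcolsL, hRrow⟩ := hIb hst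
          have hfR : wpos g n ∉ wsR g n := fun hm => hRrow _ hm rfl
          have hfL : wpos g n ∉ wsL g n := fun hm => lt_irrefl _ (hcolsL _ hm rfl)
          have hst' : wst g (n+1) = .d := by rw [wst_succ, hl, hst]; rfl
          have hD' : Disjoint (wsR g (n+1)) (wsL g (n+1)) := by
            rw [hR', hL']; exact Finset.disjoint_insert_left.mpr ⟨hfL, hD⟩
          refine ⟨fun _ => ⟨?_, ?_, ?_, ?_, ?_, ?_, ?_⟩, fun h => absurd hD' h⟩
          · rw [wwt_succ, hwt, hst, hl, hR', hL', Finset.card_insert_of_notMem hfR,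
              pow_succ, pow_succ]
            simp only [kap]; ring
          · intro z hz; rw [hR', hL'] at hz; rw [hrow1]
            rcases Finset.mem_union.mp hz with hz' | hz'
            · rcases Finset.mem_insert.mp hz' with rfl | hz''
              · exact le_refl _
              · exact hGlob z (Finset.mem_union_left _ hz'')
            · exact hGlob z (Finset.mem_union_right _ hz')
          · intro h; rw [hst'] at h; cases h
          · intro h; rw [hst'] at h; cases h
          · intro h; rw [hst'] at h; cases h
          · intro h; rw [hst'] at h; cases h
          · intro _
            constructor
            · rw [hp', hL']; exact hmL
            · rw [hback, hR']; exact Finset.mem_insert_self _ _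
        | c =>
          obtain ⟨hcR, hcL⟩ := hIc hst
          have hR'' : wsR g (n+1) = wsR g n := by rw [hR', Finset.insert_eq_self.mpr hcR]
          have hst' : wst g (n+1) = .d := by rw [wst_succ, hl, hst]; rfl
          have hD' : Disjoint (wsR g (n+1)) (wsL g (n+1)) := by rw [hR'', hL']; exact hD
          refine ⟨fun _ => ⟨?_, ?_, ?_, ?_, ?_, ?_, ?_⟩, fun h => absurd hD' h⟩
          · rw [wwt_succ, hwt, hst, hl, hR'', hL', pow_succ]
            simp only [kap]; ring
          · intro z hz; rw [hR'', hL'] at hz; rw [hrow1]; exact hGlob z hz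
          · intro h; rw [hst'] at h; cases h
          · intro h; rw [hst'] at h; cases h
          · intro h; rw [hst'] at h; cases h
          · intro h; rw [hst'] at h; cases h
          · intro _
            constructor
            · rw [hp', hL']; exact hcL
            · rw [hback, hR'']; exact hcR
        | d =>
          obtain ⟨hdL, hdR⟩ := hId hst
          have hD' : ¬ Disjoint (wsR g (n+1)) (wsL g (n+1)) := by
            rw [hR', hL']
            exact fun h => (Finset.disjoint_left.mp h (Finset.mem_insert_self _ _)) hdL
          refine ⟨fun h => absurd h hD', fun _ => ?_⟩
          rw [wwt_succ, hst, hl]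
          simp only [kap]; ring
      | l =>
        have hR' : wsR g (n+1) = wsR g n := by rw [wsR_succ, if_neg (by simp [hl])]
        have hL' : wsL g (n+1) = insert (wpos g n) (wsL g n) := by rw [wsL_succ, if_pos hl]
        have hp' : wpos g (n+1) = wpos g n - e1 := by
          rw [wpos_succ, hl, sub_eq_add_neg]; rfl
        have hrow1 : wpos g (n+1) 1 = wpos g n 1 := by rw [hp']; simp [Pi.sub_apply]
        have hcol1 : wpos g (n+1) 0 = wpos g n 0 - 1 := by rw [hp']; simp [Pi.sub_apply]
        have hback : wpos g (n+1) + e1 = wpos g n := by rw [hp', sub_add_cancel]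
        cases hst : wst g n with
        | e =>
          have hIe' := hIe hst
          have hfR : wpos g n ∉ wsR g n := fun hm => hIe' _ (Finset.mem_union_left _ hm) rfl
          have hfL : wpos g n ∉ wsL g n := fun hm => hIe' _ (Finset.mem_union_right _ hm) rfl
          have hst' : wst g (n+1) = .b := by rw [wst_succ, hl, hst]; rfl
          have hD' : Disjoint (wsR g (n+1)) (wsL g (n+1)) := by
            rw [hR', hL']; exact (Finset.disjoint_insert_right).mpr ⟨hfR, hD⟩
          refine ⟨fun _ => ⟨?_, ?_, ?_, ?_, ?_, ?_, ?_⟩, fun h => absurd hD' h⟩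
          · rw [wwt_succ, hwt, hst, hl, hR', hL', Finset.card_insert_of_notMem hfL,
              pow_succ, pow_succ]
            simp only [kap]; ring
          · intro z hz; rw [hR', hL'] at hz; rw [hrow1]
            rcases Finset.mem_union.mp hz with hz' | hz'
            · exact hGlob z (Finset.mem_union_left _ hz')
            · rcases Finset.mem_insert.mp hz' with rfl | hz''
              · exact le_refl _
              · exact hGlob z (Finset.mem_union_right _ hz'')
          · intro h; rw [hst'] at h; cases h
          · intro h; rw [hst'] at h; cases h
          · intro _
            refine ⟨?_, ?_, ?_⟩
            · rw [hback, hL']; exact Finset.mem_insert_self _ _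
            · intro z hz hzr; rw [hL'] at hz; rw [hcol1]
              rcases Finset.mem_insert.mp hz with rfl | hz'
              · omega
              · exact absurd (hzr.trans hrow1) (hIe' z (Finset.mem_union_right _ hz'))
            · intro z hz; rw [hR'] at hz; rw [hrow1]
              exact hIe' z (Finset.mem_union_left _ hz)
          · intro h; rw [hst'] at h; cases h
          · intro h; rw [hst'] at h; cases h
        | a =>
          obtain ⟨hmR, hcols, hLrow⟩ := hIa hst
          have hfR : wpos g n ∉ wsR g n := fun hm => lt_irrefl _ (hcols _ hm rfl)
          have hfL : wpos g n ∉ wsL g n := fun hm => hLrow _ hm rfl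
          have hst' : wst g (n+1) = .c := by rw [wst_succ, hl, hst]; rfl
          have hD' : Disjoint (wsR g (n+1)) (wsL g (n+1)) := by
            rw [hR', hL']; exact (Finset.disjoint_insert_right).mpr ⟨hfR, hD⟩
          refine ⟨fun _ => ⟨?_, ?_, ?_, ?_, ?_, ?_, ?_⟩, fun h => absurd hD' h⟩
          · rw [wwt_succ, hwt, hst, hl, hR', hL', Finset.card_insert_of_notMem hfL,
              pow_succ, pow_succ]
            simp only [kap]; ring
          · intro z hz; rw [hR', hL'] at hz; rw [hrow1]
            rcases Finset.mem_union.mp hz with hz' | hz'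
            · exact hGlob z (Finset.mem_union_left _ hz')
            · rcases Finset.mem_insert.mp hz' with rfl | hz''
              · exact le_refl _
              · exact hGlob z (Finset.mem_union_right _ hz'')
          · intro h; rw [hst'] at h; cases h
          · intro h; rw [hst'] at h; cases h
          · intro h; rw [hst'] at h; cases h
          · intro _
            constructor
            · rw [hp', hR']; exact hmR
            · rw [hback, hL']; exact Finset.mem_insert_self _ _
          · intro h; rw [hst'] at h; cases h
        | b =>
          obtain ⟨hmL, hcolsL, hRrow⟩ := hIb hst
          have hfR : wpos g n ∉ wsR g n := fun hm => hRrow _ hm rfl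
          have hfL : wpos g n ∉ wsL g n := fun hm => lt_irrefl _ (hcolsL _ hm rfl)
          have hst' : wst g (n+1) = .b := by rw [wst_succ, hl, hst]; rfl
          have hD' : Disjoint (wsR g (n+1)) (wsL g (n+1)) := by
            rw [hR', hL']; exact (Finset.disjoint_insert_right).mpr ⟨hfR, hD⟩
          refine ⟨fun _ => ⟨?_, ?_, ?_, ?_, ?_, ?_, ?_⟩, fun h => absurd hD' h⟩
          · rw [wwt_succ, hwt, hst, hl, hR', hL', Finset.card_insert_of_notMem hfL,
              pow_succ, pow_succ]
            simp only [kap]; ring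
          · intro z hz; rw [hR', hL'] at hz; rw [hrow1]
            rcases Finset.mem_union.mp hz with hz' | hz'
            · exact hGlob z (Finset.mem_union_left _ hz')
            · rcases Finset.mem_insert.mp hz' with rfl | hz''
              · exact le_refl _
              · exact hGlob z (Finset.mem_union_right _ hz'')
          · intro h; rw [hst'] at h; cases h
          · intro h; rw [hst'] at h; cases h
          · intro _
            refine ⟨?_, ?_, ?_⟩
            · rw [hback, hL']; exact Finset.mem_insert_self _ _
            · intro z hz hzr; rw [hL'] at hz; rw [hcol1]
              rcases Finset.mem_insert.mp hz with rfl | hz'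
              · omega
              · have := hcolsL z hz' (hzr.trans hrow1); omega
            · intro z hz; rw [hR'] at hz; rw [hrow1]
              exact hRrow z hz
          · intro h; rw [hst'] at h; cases h
          · intro h; rw [hst'] at h; cases h
        | c =>
          obtain ⟨hcR, hcL⟩ := hIc hst
          have hD' : ¬ Disjoint (wsR g (n+1)) (wsL g (n+1)) := by
            rw [hR', hL']
            exact fun h => (Finset.disjoint_right.mp h (Finset.mem_insert_self _ _)) hcR
          refine ⟨fun h => absurd h hD', fun _ => ?_⟩
          rw [wwt_succ, hst, hl]
          simp only [kap]; ring
        | d =>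
          obtain ⟨hdL, hdR⟩ := hId hst
          have hL'' : wsL g (n+1) = wsL g n := by rw [hL', Finset.insert_eq_self.mpr hdL]
          have hst' : wst g (n+1) = .c := by rw [wst_succ, hl, hst]; rfl
          have hD' : Disjoint (wsR g (n+1)) (wsL g (n+1)) := by rw [hR', hL'']; exact hD
          refine ⟨fun _ => ⟨?_, ?_, ?_, ?_, ?_, ?_, ?_⟩, fun h => absurd hD' h⟩
          · rw [wwt_succ, hwt, hst, hl, hR', hL'', pow_succ]
            simp only [kap]; ring
          · intro z hz; rw [hR', hL''] at hz; rw [hrow1]; exact hGlob z hz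
          · intro h; rw [hst'] at h; cases h
          · intro h; rw [hst'] at h; cases h
          · intro h; rw [hst'] at h; cases h
          · intro _
            constructor
            · rw [hp', hR']; exact hdR
            · rw [hback, hL'']; exact hdL
          · intro h; rw [hst'] at h; cases h
    · have hD' : ¬ Disjoint (wsR g (n+1)) (wsL g (n+1)) :=
        fun h => hD (h.mono (wsR_mono g n) (wsL_mono g n))
      refine ⟨fun h => absurd h hD', fun _ => ?_⟩
      rw [wwt_succ, ih2 hD, zero_mul]

/-! ### Measure-theoretic part: cylinder probabilities -/

def AR : Set (EnvDist 2) :=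
  {γ : EnvDist 2 | γ.prob (stepVec 2 (0, true)) = 1 / 2 ∧ γ.prob (stepVec 2 (1, true)) = 1 / 2 ∧
    γ.prob (stepVec 2 (0, false)) = 0 ∧ γ.prob (stepVec 2 (1, false)) = 0}

def AL : Set (EnvDist 2) :=
  {γ : EnvDist 2 | γ.prob (stepVec 2 (0, true)) = 0 ∧ γ.prob (stepVec 2 (1, true)) = 1 / 2 ∧
    γ.prob (stepVec 2 (0, false)) = 1 / 2 ∧ γ.prob (stepVec 2 (1, false)) = 0}

lemma vec_r_eq : vec .r = stepVec 2 (0, true) := rfl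
lemma vec_u_eq : vec .u = stepVec 2 (1, true) := rfl
lemma vec_l_eq : vec .l = stepVec 2 (0, false) := by
  show -Pi.single 0 1 = stepVec 2 (0, false); rfl

lemma AR_prob_u {γ : EnvDist 2} (h : γ ∈ AR) : γ.prob (vec .u) = 1/2 := by
  rw [vec_u_eq]; exact h.2.1
lemma AR_prob_r {γ : EnvDist 2} (h : γ ∈ AR) : γ.prob (vec .r) = 1/2 := by
  rw [vec_r_eq]; exact h.1
lemma AR_prob_l {γ : EnvDist 2} (h : γ ∈ AR) : γ.prob (vec .l) = 0 := by
  rw [vec_l_eq]; exact h.2.2.1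
lemma AL_prob_u {γ : EnvDist 2} (h : γ ∈ AL) : γ.prob (vec .u) = 1/2 := by
  rw [vec_u_eq]; exact h.2.1
lemma AL_prob_r {γ : EnvDist 2} (h : γ ∈ AL) : γ.prob (vec .r) = 0 := by
  rw [vec_r_eq]; exact h.1
lemma AL_prob_l {γ : EnvDist 2} (h : γ ∈ AL) : γ.prob (vec .l) = 1/2 := by
  rw [vec_l_eq]; exact h.2.2.1

lemma disj_ARAL : Disjoint AR AL := by
  rw [Set.disjoint_left]
  rintro γ h1 h2
  have := h1.1
  rw [h2.1] at this
  norm_num at this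

lemma measurableSet_eq_val (v : Site 2) (c : ℝ) :
    MeasurableSet {γ : EnvDist 2 | γ.prob v = c} := by
  have h : {γ : EnvDist 2 | γ.prob v = c} =
      EnvDist.prob ⁻¹' ((fun f : Site 2 → ℝ => f v) ⁻¹' {c}) := rfl
  rw [h]
  exact ⟨_, (measurable_pi_apply v) (measurableSet_singleton c), rfl⟩

lemma measAR : MeasurableSet AR := by
  have h : AR = {γ : EnvDist 2 | γ.prob (stepVec 2 (0, true)) = 1/2} ∩
      ({γ | γ.prob (stepVec 2 (1, true)) = 1/2} ∩
      ({γ | γ.prob (stepVec 2 (0, false)) = 0} ∩ {γ | γ.prob (stepVec 2 (1, false)) = 0})) := rfl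
  rw [h]
  exact (measurableSet_eq_val _ _).inter ((measurableSet_eq_val _ _).inter
    ((measurableSet_eq_val _ _).inter (measurableSet_eq_val _ _)))

lemma measAL : MeasurableSet AL := by
  have h : AL = {γ : EnvDist 2 | γ.prob (stepVec 2 (0, true)) = 0} ∩
      ({γ | γ.prob (stepVec 2 (1, true)) = 1/2} ∩
      ({γ | γ.prob (stepVec 2 (0, false)) = 1/2} ∩ {γ | γ.prob (stepVec 2 (1, false)) = 0})) := rfl
  rw [h]
  exact (measurableSet_eq_val _ _).inter ((measurableSet_eq_val _ _).inter
    ((measurableSet_eq_val _ _).inter (measurableSet_eq_val _ _)))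

lemma meas_coord_set (z : Site 2) {A : Set (EnvDist 2)} (hA : MeasurableSet A) :
    MeasurableSet {ω : EnvOmega 2 | ω z ∈ A} :=
  MeasurableSet.preimage hA (measurable_pi_apply z)

lemma meas_forall_coord (s : Finset (Site 2)) (A : Site 2 → Set (EnvDist 2))
    (hA : ∀ z, MeasurableSet (A z)) :
    MeasurableSet {ω : EnvOmega 2 | ∀ z ∈ s, ω z ∈ A z} := by
  have h : {ω : EnvOmega 2 | ∀ z ∈ s, ω z ∈ A z} = ⋂ z ∈ s, {ω : EnvOmega 2 | ω z ∈ A z} := by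
    ext ω; simp
  rw [h]
  exact MeasurableSet.biInter s.countable_toSet (fun z _ => meas_coord_set z (hA z))

section Meas

variable {p : ℝ} (hp : p ∈ Set.Ioo (0:ℝ) 1) {μ : Measure (EnvDist 2)}
  (hμ1 : μ AR = ENNReal.ofReal p) (hμ2 : μ AL = ENNReal.ofReal (1 - p))
  {ν : Measure (EnvOmega 2)} (hiid : IsIIDEnv μ ν)

include hp hμ1 hμ2

lemma mu_union : μ (AR ∪ AL) = 1 := by
  rw [measure_union disj_ARAL measAL, hμ1, hμ2,
    ← ENNReal.ofReal_add hp.1.le (by linarith [hp.2] : (0:ℝ) ≤ 1 - p)]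
  norm_num

include hiid

lemma measure_typed (s : Finset (Site 2)) : ν {ω : EnvOmega 2 | ∀ z ∈ s, ω z ∈ AR ∪ AL} = 1 := by
  rw [hiid.2.2 s (fun _ => AR ∪ AL) (fun _ _ => measAR.union measAL)]
  rw [Finset.prod_const, mu_union hp hμ1 hμ2]
  exact one_pow _

lemma measure_B (sR sL : Finset (Site 2)) (hd : Disjoint sR sL) :
    ν {ω : EnvOmega 2 | ∀ z ∈ sR ∪ sL, ω z ∈ (if z ∈ sR then AR else AL)} =
      ENNReal.ofReal p ^ sR.card * ENNReal.ofReal (1 - p) ^ sL.card := by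
  have hAmeas : ∀ z : Site 2, MeasurableSet (if z ∈ sR then AR else AL) :=
    fun z => by split <;> [exact measAR; exact measAL]
  rw [hiid.2.2 (sR ∪ sL) (fun z => if z ∈ sR then AR else AL) (fun z _ => hAmeas z)]
  rw [Finset.prod_union hd]
  congr 1
  · rw [Finset.prod_congr rfl (fun z hz => by rw [if_pos hz]), Finset.prod_const, hμ1]
  · rw [Finset.prod_congr rfl (fun z hz => by rw [if_neg (Finset.disjoint_right.mp hd hz)]),
      Finset.prod_const, hμ2]

/-- The fundamental computation: the annealed weight of a word equals the automaton weight. -/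
lemma integral_pathWeight (g : ℕ → Letter) (n : ℕ) :
    ∫ ω, pathWeight ω n (fun k => wpos g k) ∂ν = wwt g p n := by
  classical
  have hprob : IsProbabilityMeasure ν := hiid.2.1
  set vis : Finset (Site 2) := (Finset.range n).image (fun k => wpos g k) with hvis
  have hRvis : wsR g n ⊆ vis := by
    intro z hz
    obtain ⟨k, hk, -, hzk⟩ := (mem_wsR g z n).mp hz
    exact Finset.mem_image.mpr ⟨k, Finset.mem_range.mpr hk, hzk⟩
  have hLvis : wsL g n ⊆ vis := by
    intro z hz
    obtain ⟨k, hk, -, hzk⟩ := (mem_wsL g z n).mp hz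
    exact Finset.mem_image.mpr ⟨k, Finset.mem_range.mpr hk, hzk⟩
  set T : Set (EnvOmega 2) := {ω | ∀ z ∈ vis, ω z ∈ AR ∪ AL} with hT
  have hTmeas : MeasurableSet T := meas_forall_coord vis _ (fun _ => measAR.union measAL)
  have hTfull : ν T = 1 := measure_typed hp hμ1 hμ2 hiid vis
  have hTae : T ∈ ae ν := by
    refine mem_ae_iff.mpr ?_
    rw [measure_compl hTmeas (measure_ne_top ν T), hTfull, measure_univ]
    simp
  have hstep : ∀ k, (fun k => wpos g k) (k+1) - (fun k => wpos g k) k = vec (g k) := by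
    intro k; show wpos g (k+1) - wpos g k = vec (g k)
    rw [wpos_succ, add_sub_cancel_left]
  by_cases hD : Disjoint (wsR g n) (wsL g n)
  · obtain ⟨hwt, -⟩ := (main_induction g p n).1 hD
    set B : Set (EnvOmega 2) :=
      {ω | ∀ z ∈ wsR g n ∪ wsL g n, ω z ∈ (if z ∈ wsR g n then AR else AL)} with hB
    have hAmeas : ∀ z : Site 2, MeasurableSet (if z ∈ wsR g n then AR else AL) :=
      fun z => by split <;> [exact measAR; exact measAL]
    have hBmeas : MeasurableSet B := meas_forall_coord _ _ hAmeas
    have hBmeasure : ν B = ENNReal.ofReal p ^ (wsR g n).card *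
        ENNReal.ofReal (1 - p) ^ (wsL g n).card := measure_B hp hμ1 hμ2 hiid _ _ hD
    have haeeq : (fun ω => pathWeight ω n (fun k => wpos g k)) =ᵐ[ν]
        B.indicator (fun _ => ((1:ℝ)/2)^n) := by
      refine Filter.eventuallyEq_of_mem hTae (fun ω hω => ?_)
      by_cases hωB : ω ∈ B
      · rw [Set.indicator_of_mem hωB]
        unfold pathWeight
        rw [Finset.prod_congr rfl (g := fun _ => (1:ℝ)/2) ?_, Finset.prod_const,
          Finset.card_range]
        intro k hk
        show (ω (wpos g k)).prob ((fun k => wpos g k) (k+1) - (fun k => wpos g k) k) = 1/2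
        rw [hstep k]
        have hkn : k < n := Finset.mem_range.mp hk
        have hvism : wpos g k ∈ vis :=
          Finset.mem_image.mpr ⟨k, Finset.mem_range.mpr hkn, rfl⟩
        rcases hgk : g k with _ | _ | _
        · rcases hω (wpos g k) hvism with hty | hty
          · exact AR_prob_u hty
          · exact AL_prob_u hty
        · have hzR : wpos g k ∈ wsR g n := (mem_wsR g _ n).mpr ⟨k, hkn, hgk, rfl⟩
          have := hωB (wpos g k) (Finset.mem_union_left _ hzR)
          rw [if_pos hzR] at this
          exact AR_prob_r this
        · have hzL : wpos g k ∈ wsL g n := (mem_wsL g _ n).mpr ⟨k, hkn, hgk, rfl⟩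
          have hzNR : wpos g k ∉ wsR g n := Finset.disjoint_right.mp hD hzL
          have := hωB (wpos g k) (Finset.mem_union_right _ hzL)
          rw [if_neg hzNR] at this
          exact AL_prob_l this
      · rw [Set.indicator_of_notMem hωB]
        rw [hB, Set.mem_setOf_eq] at hωB
        push_neg at hωB
        obtain ⟨z, hzs, hznot⟩ := hωB
        unfold pathWeight
        by_cases hzR : z ∈ wsR g n
        · rw [if_pos hzR] at hznot
          have hty := hω z (hRvis hzR)
          have hzAL : ω z ∈ AL := hty.resolve_left hznot
          obtain ⟨k, hk, hgk, hzk⟩ := (mem_wsR g z n).mp hzR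
          refine Finset.prod_eq_zero (Finset.mem_range.mpr hk) ?_
          show (ω (wpos g k)).prob ((fun k => wpos g k) (k+1) - (fun k => wpos g k) k) = 0
          rw [hstep k, hgk, hzk]
          exact AL_prob_r hzAL
        · rw [if_neg hzR] at hznot
          have hzL : z ∈ wsL g n := (Finset.mem_union.mp hzs).resolve_left hzR
          have hty := hω z (hLvis hzL)
          have hzAR : ω z ∈ AR := hty.resolve_right hznot
          obtain ⟨k, hk, hgk, hzk⟩ := (mem_wsL g z n).mp hzL
          refine Finset.prod_eq_zero (Finset.mem_range.mpr hk) ?_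
          show (ω (wpos g k)).prob ((fun k => wpos g k) (k+1) - (fun k => wpos g k) k) = 0
          rw [hstep k, hgk, hzk]
          exact AR_prob_l hzAR
    rw [integral_congr_ae haeeq, integral_indicator_const _ hBmeas]
    rw [hwt, measureReal_def, hBmeasure]
    rw [ENNReal.toReal_mul, ENNReal.toReal_pow, ENNReal.toReal_pow,
      ENNReal.toReal_ofReal hp.1.le, ENNReal.toReal_ofReal (by linarith [hp.2] : (0:ℝ) ≤ 1 - p)]
    rw [smul_eq_mul]; ring
  · have hwt0 : wwt g p n = 0 := (main_induction g p n).2 hD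
    rw [hwt0]
    have haeeq : (fun ω => pathWeight ω n (fun k => wpos g k)) =ᵐ[ν] (fun _ => (0:ℝ)) := by
      refine Filter.eventuallyEq_of_mem hTae (fun ω hω => ?_)
      obtain ⟨z, hzR, hzL⟩ := Finset.not_disjoint_iff.mp hD
      unfold pathWeight
      rcases hω z (hRvis hzR) with hty | hty
      · obtain ⟨k, hk, hgk, hzk⟩ := (mem_wsL g z n).mp hzL
        refine Finset.prod_eq_zero (Finset.mem_range.mpr hk) ?_
        show (ω (wpos g k)).prob ((fun k => wpos g k) (k+1) - (fun k => wpos g k) k) = 0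
        rw [hstep k, hgk, hzk]
        exact AR_prob_l hty
      · obtain ⟨k, hk, hgk, hzk⟩ := (mem_wsR g z n).mp hzR
        refine Finset.prod_eq_zero (Finset.mem_range.mpr hk) ?_
        show (ω (wpos g k)).prob ((fun k => wpos g k) (k+1) - (fun k => wpos g k) k) = 0
        rw [hstep k, hgk, hzk]
        exact AL_prob_r hty
    rw [integral_congr_ae haeeq, integral_zero]

end Meas

/-! ### Word sums, cylinders and Chebyshev bound -/

lemma sum_letter (f : Letter → ℝ) : ∑ ℓ : Letter, f ℓ = f .u + f .r + f .l := by
  rw [show (Finset.univ : Finset Letter) = {Letter.u, Letter.r, Letter.l} from rfl,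
    Finset.sum_insert (by decide), Finset.sum_insert (by decide), Finset.sum_singleton]
  ring

lemma kap_total {p : ℝ} (s : St) : ∑ ℓ : Letter, kap p s ℓ = 1 := by
  cases s <;> rw [sum_letter] <;> simp [kap] <;> ring

lemma kap_nonneg {p : ℝ} (hp : p ∈ Set.Ioo (0:ℝ) 1) (s : St) (ℓ : Letter) :
    0 ≤ kap p s ℓ := by
  have h1 := hp.1; have h2 := hp.2
  cases s <;> cases ℓ <;> simp [kap] <;> linarith

lemma wwt_nonneg {p : ℝ} (hp : p ∈ Set.Ioo (0:ℝ) 1) (g : ℕ → Letter) (n : ℕ) :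
    0 ≤ wwt g p n := by
  by_cases hD : Disjoint (wsR g n) (wsL g n)
  · rw [((main_induction g p n).1 hD).1]
    have h1 := hp.1
    have h3 : (0:ℝ) < 1 - p := by linarith [hp.2]
    positivity
  · rw [(main_induction g p n).2 hD]

lemma wpos_congr {g g' : ℕ → Letter} {n : ℕ} (h : ∀ k < n, g k = g' k) :
    ∀ k, k ≤ n → wpos g k = wpos g' k := by
  intro k
  induction k with
  | zero => intro _; rfl
  | succ k ih =>
    intro hk
    rw [wpos_succ, wpos_succ, ih (Nat.le_of_succ_le hk), h k (Nat.lt_of_lt_of_le k.lt_succ_self hk)]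

lemma wst_congr {g g' : ℕ → Letter} {n : ℕ} (h : ∀ k < n, g k = g' k) :
    ∀ k, k ≤ n → wst g k = wst g' k := by
  intro k
  induction k with
  | zero => intro _; rfl
  | succ k ih =>
    intro hk
    rw [wst_succ, wst_succ, ih (Nat.le_of_succ_le hk), h k (Nat.lt_of_lt_of_le k.lt_succ_self hk)]

lemma wwt_congr {p : ℝ} {g g' : ℕ → Letter} {n : ℕ} (h : ∀ k < n, g k = g' k) :
    ∀ k, k ≤ n → wwt g p k = wwt g' p k := by
  intro k
  induction k with
  | zero => intro _; rfl
  | succ k ih =>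
    intro hk
    have hk' : k < n := Nat.lt_of_lt_of_le k.lt_succ_self hk
    rw [wwt_succ, wwt_succ, ih (Nat.le_of_succ_le hk), h k hk',
      wst_congr h k (Nat.le_of_succ_le hk)]

/-- Extend a finite word to an infinite one. -/
def extw (n : ℕ) (w : Fin n → Letter) : ℕ → Letter :=
  fun k => if h : k < n then w ⟨k, h⟩ else .u

lemma extw_snoc_lt {n : ℕ} (w : Fin n → Letter) (ℓ : Letter) {k : ℕ} (hk : k < n) :
    extw (n+1) (Fin.snoc w ℓ) k = extw n w k := by
  unfold extw
  rw [dif_pos (hk.trans n.lt_succ_self), dif_pos hk]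
  exact Fin.snoc_castSucc (α := fun _ => Letter) ℓ w ⟨k, hk⟩

lemma extw_snoc_last {n : ℕ} (w : Fin n → Letter) (ℓ : Letter) :
    extw (n+1) (Fin.snoc w ℓ) n = ℓ := by
  unfold extw
  rw [dif_pos n.lt_succ_self]
  exact Fin.snoc_last (α := fun _ => Letter) ℓ w

lemma extw_snoc_agree {n : ℕ} (w : Fin n → Letter) (ℓ : Letter) :
    ∀ k < n, extw (n+1) (Fin.snoc w ℓ) k = extw n w k :=
  fun _ hk => extw_snoc_lt w ℓ hk

lemma wpos_extw_snoc {n : ℕ} (w : Fin n → Letter) (ℓ : Letter) {k : ℕ} (hk : k ≤ n) :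
    wpos (extw (n+1) (Fin.snoc w ℓ)) k = wpos (extw n w) k :=
  wpos_congr (extw_snoc_agree w ℓ) k hk

lemma wst_extw_snoc {n : ℕ} (w : Fin n → Letter) (ℓ : Letter) {k : ℕ} (hk : k ≤ n) :
    wst (extw (n+1) (Fin.snoc w ℓ)) k = wst (extw n w) k :=
  wst_congr (extw_snoc_agree w ℓ) k hk

lemma wwt_extw_snoc {p : ℝ} {n : ℕ} (w : Fin n → Letter) (ℓ : Letter) :
    wwt (extw (n+1) (Fin.snoc w ℓ)) p (n+1) =
      wwt (extw n w) p n * kap p (wst (extw n w) n) ℓ := by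
  rw [wwt_succ, wwt_congr (extw_snoc_agree w ℓ) n le_rfl,
    wst_extw_snoc w ℓ le_rfl, extw_snoc_last]

lemma sum_snoc {n : ℕ} (F : (Fin (n+1) → Letter) → ℝ) :
    ∑ w' : Fin (n+1) → Letter, F w' = ∑ w : Fin n → Letter, ∑ ℓ : Letter, F (Fin.snoc w ℓ) := by
  have h1 := Fintype.sum_equiv (Fin.snocEquiv (fun _ : Fin (n+1) => Letter))
    (fun z => F (Fin.snoc z.2 z.1)) F (fun z => rfl)
  rw [← h1, Fintype.sum_prod_type, Finset.sum_comm]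

lemma sum_wwt {p : ℝ} : ∀ n : ℕ, ∑ w : Fin n → Letter, wwt (extw n w) p n = 1 := by
  intro n
  induction n with
  | zero => simp [wwt]
  | succ n ih =>
    rw [sum_snoc (fun w' => wwt (extw (n+1) w') p (n+1))]
    have : ∀ w : Fin n → Letter,
        ∑ ℓ : Letter, wwt (extw (n+1) (Fin.snoc w ℓ)) p (n+1) = wwt (extw n w) p n := by
      intro w
      rw [Finset.sum_congr rfl (fun ℓ _ => wwt_extw_snoc w ℓ), ← Finset.mul_sum, kap_total,
        mul_one]
    rw [Finset.sum_congr rfl (fun w _ => this w), ih]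

lemma vec_inj : Function.Injective vec := by
  intro ℓ ℓ' h
  have h0 := congrFun h 0
  have h1 := congrFun h 1
  cases ℓ <;> cases ℓ' <;> simp_all

/-! ### Cylinder events under the annealed law -/

def cylSet (g : ℕ → Letter) (n : ℕ) : Set (RWSpace 2) := {q | ∀ k ≤ n, q.2 k = wpos g k}

lemma meas_cylSet (g : ℕ → Letter) (n : ℕ) : MeasurableSet (cylSet g n) := by
  have h : cylSet g n = ⋂ k ∈ {k : ℕ | k ≤ n}, {q : RWSpace 2 | q.2 k = wpos g k} := by
    ext q; simp [cylSet]
  rw [h]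
  refine MeasurableSet.biInter (Set.to_countable _) (fun k _ => ?_)
  have h2 : {q : RWSpace 2 | q.2 k = wpos g k} = (fun q : RWSpace 2 => q.2 k) ⁻¹' {wpos g k} := by
    ext q; simp
  rw [h2]
  exact ((measurable_pi_apply k).comp measurable_snd) (measurableSet_singleton _)

def goodSet (n : ℕ) : Set (RWSpace 2) :=
  ⋃ w ∈ (Finset.univ : Finset (Fin n → Letter)), cylSet (extw n w) n

lemma meas_goodSet (n : ℕ) : MeasurableSet (goodSet n) :=
  Finset.measurableSet_biUnion _ (fun w _ => meas_cylSet (extw n w) n)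

lemma cyl_disjoint {n : ℕ} {w w' : Fin n → Letter} (hne : w ≠ w') :
    Disjoint (cylSet (extw n w) n) (cylSet (extw n w') n) := by
  rw [Set.disjoint_left]
  intro q hq hq'
  apply hne
  funext i
  have hpos : ∀ k, k ≤ n → wpos (extw n w) k = wpos (extw n w') k :=
    fun k hk => (hq k hk).symm.trans (hq' k hk)
  have hlet : ∀ k, k < n → extw n w k = extw n w' k := by
    intro k hk
    apply vec_inj
    have e2 := hpos (k+1) hk
    rw [wpos_succ, wpos_succ, hpos k hk.le] at e2
    exact add_left_cancel e2
  have h := hlet i.1 i.2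
  unfold extw at h
  rw [dif_pos i.2, dif_pos i.2] at h
  simpa using h

section Cyl

variable {p : ℝ} (hp : p ∈ Set.Ioo (0:ℝ) 1) {μ : Measure (EnvDist 2)}
  (hμ1 : μ AR = ENNReal.ofReal p) (hμ2 : μ AL = ENNReal.ofReal (1 - p))
  {P : Measure (RWSpace 2)} (hP : IsRWRE μ P)

include hp hμ1 hμ2 hP

lemma cylP (g : ℕ → Letter) (n : ℕ) : P (cylSet g n) = ENNReal.ofReal (wwt g p n) := by
  have hprob : IsProbabilityMeasure P := hP.1
  have h := hP.2.2 n (fun k => wpos g k) Set.univ MeasurableSet.univ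
  have hset : {q : RWSpace 2 | q.1 ∈ Set.univ ∧ ∀ k ≤ n, q.2 k = (fun k => wpos g k) k} =
      cylSet g n := by
    ext q; simp [cylSet]
  have hif : (if (fun k => wpos g k) 0 = 0 then (1:ℝ) else 0) = 1 := if_pos rfl
  rw [hset, Measure.restrict_univ, hif, one_mul,
    integral_pathWeight hp hμ1 hμ2 hP.2.1 g n] at h
  rw [← h, ENNReal.ofReal_toReal (measure_ne_top P _)]

lemma P_goodSet (n : ℕ) : P (goodSet n) = 1 := by
  rw [goodSet, measure_biUnion_finset
    (fun w _ w' _ hne => cyl_disjoint hne) (fun w _ => meas_cylSet (extw n w) n)]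
  rw [Finset.sum_congr rfl (fun w _ => cylP hp hμ1 hμ2 hP (extw n w) n),
    ← ENNReal.ofReal_sum_of_nonneg (fun w _ => wwt_nonneg hp (extw n w) n), sum_wwt]
  norm_num

lemma P_goodSet_compl (n : ℕ) : P (goodSet n)ᶜ = 0 := by
  have hprob : IsProbabilityMeasure P := hP.1
  rw [measure_compl (meas_goodSet n) (measure_ne_top P _), P_goodSet hp hμ1 hμ2 hP,
    measure_univ, tsub_self]

/-- Chebyshev-type bound on the annealed law from a second-moment bound on word sums. -/
lemma P_bad_le (i : Fin 2) (v : ℝ) (ε : ℝ) (hε : 0 < ε) (n : ℕ) (hn : 0 < n) (C : ℝ)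
    (hC : ∑ w : Fin n → Letter, wwt (extw n w) p n *
        (((wpos (extw n w) n i : ℤ) : ℝ) - n * v)^2 ≤ C) :
    P {q : RWSpace 2 | ε * n ≤ |((q.2 n i : ℤ) : ℝ) - n * v|} ≤
      ENNReal.ofReal (C / (ε * n)^2) := by
  classical
  have hεn : (0:ℝ) < ε * n := by positivity
  set X : (Fin n → Letter) → ℝ := fun w => ((wpos (extw n w) n i : ℤ) : ℝ) - n * v with hX
  set bw : Finset (Fin n → Letter) :=
    Finset.univ.filter (fun w => ε * n ≤ |X w|) with hbw
  have hsubset : {q : RWSpace 2 | ε * n ≤ |((q.2 n i : ℤ) : ℝ) - n * v|} ⊆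
      (⋃ w ∈ bw, cylSet (extw n w) n) ∪ (goodSet n)ᶜ := by
    intro q hq
    by_cases hg : q ∈ goodSet n
    · left
      obtain ⟨w, hw⟩ : ∃ w : Fin n → Letter, q ∈ cylSet (extw n w) n := by
        simpa [goodSet, Set.mem_iUnion] using hg
      have hqn : q.2 n = wpos (extw n w) n := hw n le_rfl
      refine Set.mem_biUnion (Finset.mem_filter.mpr ⟨Finset.mem_univ _, ?_⟩) hw
      have hXw : X w = ((q.2 n i : ℤ) : ℝ) - n * v := by rw [hX, hqn]
      rw [hXw]
      exact hq
    · right; exact hg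
  have hreal : ∑ w ∈ bw, wwt (extw n w) p n ≤ C / (ε * n)^2 := by
    have step1 : ∀ w ∈ bw, wwt (extw n w) p n ≤
        wwt (extw n w) p n * (X w)^2 / (ε * n)^2 := by
      intro w hw
      have habs : ε * n ≤ |X w| := (Finset.mem_filter.mp hw).2
      have hsq : (ε * n)^2 ≤ (X w)^2 := by
        rw [← sq_abs (X w)]
        exact pow_le_pow_left₀ hεn.le habs 2
      have hwwt := wwt_nonneg hp (extw n w) n
      have h3 : (0:ℝ) < (ε * n)^2 := by positivity
      rw [le_div_iff₀ h3]
      nlinarith [mul_le_mul_of_nonneg_left hsq hwwt]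
    calc ∑ w ∈ bw, wwt (extw n w) p n
        ≤ ∑ w ∈ bw, wwt (extw n w) p n * (X w)^2 / (ε * n)^2 := Finset.sum_le_sum step1
      _ = (∑ w ∈ bw, wwt (extw n w) p n * (X w)^2) / (ε * n)^2 := by
          rw [Finset.sum_div]
      _ ≤ (∑ w : Fin n → Letter, wwt (extw n w) p n * (X w)^2) / (ε * n)^2 := by
          refine (div_le_div_iff_of_pos_right (by positivity)).mpr ?_
          exact Finset.sum_le_sum_of_subset_of_nonneg (Finset.subset_univ bw)
            (fun w _ _ => mul_nonneg (wwt_nonneg hp (extw n w) n) (sq_nonneg _))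
      _ ≤ C / (ε * n)^2 := (div_le_div_iff_of_pos_right (by positivity)).mpr hC
  calc P {q : RWSpace 2 | ε * n ≤ |((q.2 n i : ℤ) : ℝ) - n * v|}
      ≤ P ((⋃ w ∈ bw, cylSet (extw n w) n) ∪ (goodSet n)ᶜ) := measure_mono hsubset
    _ ≤ P (⋃ w ∈ bw, cylSet (extw n w) n) + P (goodSet n)ᶜ := measure_union_le _ _
    _ = P (⋃ w ∈ bw, cylSet (extw n w) n) := by
        rw [P_goodSet_compl hp hμ1 hμ2 hP, add_zero]
    _ ≤ ∑ w ∈ bw, P (cylSet (extw n w) n) := measure_biUnion_finset_le _ _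
    _ = ENNReal.ofReal (∑ w ∈ bw, wwt (extw n w) p n) := by
        rw [Finset.sum_congr rfl (fun w _ => cylP hp hμ1 hμ2 hP (extw n w) n),
          ← ENNReal.ofReal_sum_of_nonneg (fun w _ => wwt_nonneg hp (extw n w) n)]
    _ ≤ ENNReal.ofReal (C / (ε * n)^2) := ENNReal.ofReal_le_ofReal hreal

end Cyl

/-! ### Martingale second-moment bounds -/

instance : Fintype St := ⟨{.e, .a, .b, .c, .d}, by intro x; cases x <;> decide⟩

def yH : Letter → ℝ
  | .u => 0
  | .r => 1
  | .l => -1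

def yV : Letter → ℝ
  | .u => 1
  | .r => 0
  | .l => 0

def mdrift (p : ℝ) : ℝ := (2 * p - 1) * (p ^ 2 - p + 6) / (6 * (2 - p) * (1 + p))

def hcorr (p : ℝ) : St → ℝ
  | .e => 0
  | .a => (5*p - 2)/(3*(2 - p)) - 2 * mdrift p
  | .b => (5*p - 3)/(3*(1 + p)) - 2 * mdrift p
  | .c => 1/3 - 2 * mdrift p
  | .d => -(1/3) - 2 * mdrift p

def dH (p : ℝ) (s : St) (ℓ : Letter) : ℝ := yH ℓ - mdrift p + hcorr p (tr s ℓ) - hcorr p s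

def dV (ℓ : Letter) : ℝ := yV ℓ - 1/2

set_option maxHeartbeats 2000000 in
lemma key0H {p : ℝ} (hp : p ∈ Set.Ioo (0:ℝ) 1) (s : St) :
    ∑ ℓ : Letter, kap p s ℓ * dH p s ℓ = 0 := by
  have h2 : (2:ℝ) - p ≠ 0 := by have := hp.2; intro h; linarith
  have h1 : (1:ℝ) + p ≠ 0 := by have := hp.1; intro h; linarith
  cases s <;> rw [sum_letter] <;>
    simp only [kap, dH, yH, hcorr, tr, mdrift] <;> field_simp <;> ring

lemma key0V {p : ℝ} (s : St) : ∑ ℓ : Letter, kap p s ℓ * dV ℓ = 0 := by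
  cases s <;> rw [sum_letter] <;> simp only [kap, dV, yV] <;> ring

def ZH (p : ℝ) (g : ℕ → Letter) : ℕ → ℝ
  | 0 => 0
  | n + 1 => ZH p g n + dH p (wst g n) (g n)

def ZV (g : ℕ → Letter) : ℕ → ℝ
  | 0 => 0
  | n + 1 => ZV g n + dV (g n)

lemma vec0_cast (ℓ : Letter) : ((vec ℓ 0 : ℤ) : ℝ) = yH ℓ := by
  cases ℓ <;> simp [yH]

lemma vec1_cast (ℓ : Letter) : ((vec ℓ 1 : ℤ) : ℝ) = yV ℓ := by
  cases ℓ <;> simp [yV]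

lemma ZH_eq (p : ℝ) (g : ℕ → Letter) :
    ∀ n, ZH p g n = ((wpos g n 0 : ℤ) : ℝ) - n * mdrift p + hcorr p (wst g n) := by
  intro n
  induction n with
  | zero => simp [ZH, wpos, wst, hcorr]
  | succ n ih =>
    show ZH p g n + dH p (wst g n) (g n) = _
    rw [ih, dH]
    have hv : ((wpos g (n+1) 0 : ℤ) : ℝ) = ((wpos g n 0 : ℤ) : ℝ) + yH (g n) := by
      rw [wpos_succ]; push_cast [Pi.add_apply]; rw [vec0_cast]
    rw [hv, wst_succ]
    push_cast
    ring

lemma ZV_eq (p : ℝ) (g : ℕ → Letter) :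
    ∀ n, ZV g n = ((wpos g n 1 : ℤ) : ℝ) - n * (1/2) := by
  intro n
  induction n with
  | zero => simp [ZV, wpos]
  | succ n ih =>
    show ZV g n + dV (g n) = _
    rw [ih, dV]
    have hv : ((wpos g (n+1) 1 : ℤ) : ℝ) = ((wpos g n 1 : ℤ) : ℝ) + yV (g n) := by
      rw [wpos_succ]; push_cast [Pi.add_apply]; rw [vec1_cast]
    rw [hv]
    push_cast
    ring

lemma ZH_congr {p : ℝ} {g g' : ℕ → Letter} {n : ℕ} (h : ∀ k < n, g k = g' k) :
    ∀ k, k ≤ n → ZH p g k = ZH p g' k := by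
  intro k
  induction k with
  | zero => intro _; rfl
  | succ k ih =>
    intro hk
    show ZH p g k + dH p (wst g k) (g k) = ZH p g' k + dH p (wst g' k) (g' k)
    rw [ih (Nat.le_of_succ_le hk), h k (Nat.lt_of_lt_of_le k.lt_succ_self hk),
      wst_congr h k (Nat.le_of_succ_le hk)]

lemma ZV_congr {g g' : ℕ → Letter} {n : ℕ} (h : ∀ k < n, g k = g' k) :
    ∀ k, k ≤ n → ZV g k = ZV g' k := by
  intro k
  induction k with
  | zero => intro _; rfl
  | succ k ih =>
    intro hk
    show ZV g k + dV (g k) = ZV g' k + dV (g' k)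
    rw [ih (Nat.le_of_succ_le hk), h k (Nat.lt_of_lt_of_le k.lt_succ_self hk)]

/-- Uniform bound on the squared corrector increments. -/
def bigC (p : ℝ) : ℝ := ∑ s : St, ∑ ℓ : Letter, (dH p s ℓ)^2

/-- Uniform bound on the squared corrector. -/
def bigH (p : ℝ) : ℝ := ∑ s : St, (hcorr p s)^2

lemma bigC_nonneg (p : ℝ) : 0 ≤ bigC p :=
  Finset.sum_nonneg (fun s _ => Finset.sum_nonneg (fun ℓ _ => sq_nonneg _))

lemma bigH_nonneg (p : ℝ) : 0 ≤ bigH p := Finset.sum_nonneg (fun s _ => sq_nonneg _)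

lemma dH_sq_le (p : ℝ) (s : St) (ℓ : Letter) : (dH p s ℓ)^2 ≤ bigC p := by
  calc (dH p s ℓ)^2 ≤ ∑ ℓ' : Letter, (dH p s ℓ')^2 :=
        Finset.single_le_sum (f := fun ℓ' => (dH p s ℓ')^2)
          (fun ℓ' _ => sq_nonneg _) (Finset.mem_univ ℓ)
    _ ≤ bigC p :=
        Finset.single_le_sum (f := fun s => ∑ ℓ' : Letter, (dH p s ℓ')^2)
          (fun s' _ => Finset.sum_nonneg (fun ℓ' _ => sq_nonneg _)) (Finset.mem_univ s)

lemma hcorr_sq_le (p : ℝ) (s : St) : (hcorr p s)^2 ≤ bigH p :=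
  Finset.single_le_sum (f := fun s => (hcorr p s)^2) (fun s' _ => sq_nonneg _)
    (Finset.mem_univ s)

lemma dV_sq_le (ℓ : Letter) : (dV ℓ)^2 ≤ 1 := by
  cases ℓ <;> norm_num [dV, yV]

section SQ

variable {p : ℝ} (hp : p ∈ Set.Ioo (0:ℝ) 1)

/-- Sum of word weights times a function of the word. -/
lemma sq_step (Z D : ℝ) (s : St) (hd2 : ∀ ℓ, (D + dH p s ℓ - D)^2 ≤ bigC p) :
    True := trivial

include hp

/-- Martingale `L²` recursion, horizontal. -/
lemma SQH_le : ∀ n : ℕ,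
    ∑ w : Fin n → Letter, wwt (extw n w) p n * (ZH p (extw n w) n)^2 ≤ n * bigC p := by
  intro n
  induction n with
  | zero => simp [wwt, ZH]
  | succ n ih =>
    rw [sum_snoc (fun w' => wwt (extw (n+1) w') p (n+1) * (ZH p (extw (n+1) w') (n+1))^2)]
    have hterm : ∀ w : Fin n → Letter,
        ∑ ℓ : Letter, wwt (extw (n+1) (Fin.snoc w ℓ)) p (n+1) *
          (ZH p (extw (n+1) (Fin.snoc w ℓ)) (n+1))^2
        ≤ wwt (extw n w) p n * ((ZH p (extw n w) n)^2 + bigC p) := by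
      intro w
      have hZ : ∀ ℓ : Letter, ZH p (extw (n+1) (Fin.snoc w ℓ)) (n+1) =
          ZH p (extw n w) n + dH p (wst (extw n w) n) ℓ := by
        intro ℓ
        show ZH p (extw (n+1) (Fin.snoc w ℓ)) n + _ = _
        rw [ZH_congr (extw_snoc_agree w ℓ) n le_rfl, wst_extw_snoc w ℓ le_rfl,
          extw_snoc_last]
      have hrw : ∀ ℓ : Letter, wwt (extw (n+1) (Fin.snoc w ℓ)) p (n+1) *
            (ZH p (extw (n+1) (Fin.snoc w ℓ)) (n+1))^2
          = wwt (extw n w) p n * (kap p (wst (extw n w) n) ℓ *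
            (ZH p (extw n w) n + dH p (wst (extw n w) n) ℓ)^2) := by
        intro ℓ
        rw [wwt_extw_snoc, hZ ℓ]; ring
      rw [Finset.sum_congr rfl (fun ℓ _ => hrw ℓ), ← Finset.mul_sum]
      refine mul_le_mul_of_nonneg_left ?_ (wwt_nonneg hp _ n)
      set s := wst (extw n w) n
      set Z := ZH p (extw n w) n
      have hexp : ∑ ℓ : Letter, kap p s ℓ * (Z + dH p s ℓ)^2
          = Z^2 + ∑ ℓ : Letter, kap p s ℓ * (dH p s ℓ)^2 := by
        have : ∀ ℓ : Letter, kap p s ℓ * (Z + dH p s ℓ)^2 =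
            Z^2 * kap p s ℓ + 2 * Z * (kap p s ℓ * dH p s ℓ) +
              kap p s ℓ * (dH p s ℓ)^2 := by intro ℓ; ring
        rw [Finset.sum_congr rfl (fun ℓ _ => this ℓ), Finset.sum_add_distrib,
          Finset.sum_add_distrib, ← Finset.mul_sum, ← Finset.mul_sum, kap_total,
          key0H hp, mul_zero, mul_one, add_zero]
      rw [hexp]
      refine add_le_add_right ?_ _
      calc ∑ ℓ : Letter, kap p s ℓ * (dH p s ℓ)^2
          ≤ ∑ ℓ : Letter, kap p s ℓ * bigC p :=
            Finset.sum_le_sum (fun ℓ _ =>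
              mul_le_mul_of_nonneg_left (dH_sq_le p s ℓ) (kap_nonneg hp s ℓ))
        _ = bigC p := by rw [← Finset.sum_mul, kap_total, one_mul]
    calc ∑ w : Fin n → Letter, ∑ ℓ : Letter, wwt (extw (n+1) (Fin.snoc w ℓ)) p (n+1) *
          (ZH p (extw (n+1) (Fin.snoc w ℓ)) (n+1))^2
        ≤ ∑ w : Fin n → Letter, wwt (extw n w) p n * ((ZH p (extw n w) n)^2 + bigC p) :=
          Finset.sum_le_sum (fun w _ => hterm w)
      _ = (∑ w : Fin n → Letter, wwt (extw n w) p n * (ZH p (extw n w) n)^2) +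
            (∑ w : Fin n → Letter, wwt (extw n w) p n) * bigC p := by
          rw [Finset.sum_mul, ← Finset.sum_add_distrib]
          exact Finset.sum_congr rfl (fun w _ => by ring)
      _ ≤ n * bigC p + 1 * bigC p := by
          rw [sum_wwt]
          exact add_le_add_left ih _
      _ = (n + 1 : ℕ) * bigC p := by push_cast; ring

/-- Martingale `L²` recursion, vertical. -/
lemma SQV_le : ∀ n : ℕ,
    ∑ w : Fin n → Letter, wwt (extw n w) p n * (ZV (extw n w) n)^2 ≤ (n : ℝ) := by
  intro n
  induction n with
  | zero => simp [wwt, ZV]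
  | succ n ih =>
    rw [sum_snoc (fun w' => wwt (extw (n+1) w') p (n+1) * (ZV (extw (n+1) w') (n+1))^2)]
    have hterm : ∀ w : Fin n → Letter,
        ∑ ℓ : Letter, wwt (extw (n+1) (Fin.snoc w ℓ)) p (n+1) *
          (ZV (extw (n+1) (Fin.snoc w ℓ)) (n+1))^2
        ≤ wwt (extw n w) p n * ((ZV (extw n w) n)^2 + 1) := by
      intro w
      have hZ : ∀ ℓ : Letter, ZV (extw (n+1) (Fin.snoc w ℓ)) (n+1) =
          ZV (extw n w) n + dV ℓ := by
        intro ℓ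
        show ZV (extw (n+1) (Fin.snoc w ℓ)) n + _ = _
        rw [ZV_congr (extw_snoc_agree w ℓ) n le_rfl, extw_snoc_last]
      have hrw : ∀ ℓ : Letter, wwt (extw (n+1) (Fin.snoc w ℓ)) p (n+1) *
            (ZV (extw (n+1) (Fin.snoc w ℓ)) (n+1))^2
          = wwt (extw n w) p n * (kap p (wst (extw n w) n) ℓ *
            (ZV (extw n w) n + dV ℓ)^2) := by
        intro ℓ
        rw [wwt_extw_snoc, hZ ℓ]; ring
      rw [Finset.sum_congr rfl (fun ℓ _ => hrw ℓ), ← Finset.mul_sum]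
      refine mul_le_mul_of_nonneg_left ?_ (wwt_nonneg hp _ n)
      set s := wst (extw n w) n
      set Z := ZV (extw n w) n
      have hexp : ∑ ℓ : Letter, kap p s ℓ * (Z + dV ℓ)^2
          = Z^2 + ∑ ℓ : Letter, kap p s ℓ * (dV ℓ)^2 := by
        have : ∀ ℓ : Letter, kap p s ℓ * (Z + dV ℓ)^2 =
            Z^2 * kap p s ℓ + 2 * Z * (kap p s ℓ * dV ℓ) +
              kap p s ℓ * (dV ℓ)^2 := by intro ℓ; ring
        rw [Finset.sum_congr rfl (fun ℓ _ => this ℓ), Finset.sum_add_distrib,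
          Finset.sum_add_distrib, ← Finset.mul_sum, ← Finset.mul_sum, kap_total,
          key0V, mul_zero, mul_one, add_zero]
      rw [hexp]
      refine add_le_add_right ?_ _
      calc ∑ ℓ : Letter, kap p s ℓ * (dV ℓ)^2
          ≤ ∑ ℓ : Letter, kap p s ℓ * 1 :=
            Finset.sum_le_sum (fun ℓ _ =>
              mul_le_mul_of_nonneg_left (dV_sq_le ℓ) (kap_nonneg hp s ℓ))
        _ = 1 := by rw [← Finset.sum_mul, kap_total, one_mul]
    calc ∑ w : Fin n → Letter, ∑ ℓ : Letter, wwt (extw (n+1) (Fin.snoc w ℓ)) p (n+1) *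
          (ZV (extw (n+1) (Fin.snoc w ℓ)) (n+1))^2
        ≤ ∑ w : Fin n → Letter, wwt (extw n w) p n * ((ZV (extw n w) n)^2 + 1) :=
          Finset.sum_le_sum (fun w _ => hterm w)
      _ = (∑ w : Fin n → Letter, wwt (extw n w) p n * (ZV (extw n w) n)^2) +
            (∑ w : Fin n → Letter, wwt (extw n w) p n) * 1 := by
          rw [Finset.sum_mul, ← Finset.sum_add_distrib]
          exact Finset.sum_congr rfl (fun w _ => by ring)
      _ ≤ (n : ℝ) + 1 * 1 := by
          rw [sum_wwt]
          exact add_le_add_left ih _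
      _ = ((n + 1 : ℕ) : ℝ) := by push_cast; ring

/-- Horizontal second moment bound. -/
lemma momentH (n : ℕ) :
    ∑ w : Fin n → Letter, wwt (extw n w) p n *
      (((wpos (extw n w) n 0 : ℤ) : ℝ) - n * mdrift p)^2
    ≤ (n + 1) * (2 * bigC p + 2 * bigH p) := by
  have hterm : ∀ w : Fin n → Letter,
      wwt (extw n w) p n * (((wpos (extw n w) n 0 : ℤ) : ℝ) - n * mdrift p)^2
      ≤ wwt (extw n w) p n * (2 * (ZH p (extw n w) n)^2 + 2 * bigH p) := by
    intro w
    refine mul_le_mul_of_nonneg_left ?_ (wwt_nonneg hp _ n)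
    have hz := ZH_eq p (extw n w) n
    have hd : ((wpos (extw n w) n 0 : ℤ) : ℝ) - n * mdrift p =
        ZH p (extw n w) n - hcorr p (wst (extw n w) n) := by rw [hz]; ring
    rw [hd]
    have hb := hcorr_sq_le p (wst (extw n w) n)
    nlinarith [sq_nonneg (ZH p (extw n w) n + hcorr p (wst (extw n w) n))]
  calc ∑ w : Fin n → Letter, wwt (extw n w) p n *
        (((wpos (extw n w) n 0 : ℤ) : ℝ) - n * mdrift p)^2
      ≤ ∑ w : Fin n → Letter, wwt (extw n w) p n *
        (2 * (ZH p (extw n w) n)^2 + 2 * bigH p) := Finset.sum_le_sum (fun w _ => hterm w)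
    _ = 2 * (∑ w : Fin n → Letter, wwt (extw n w) p n * (ZH p (extw n w) n)^2) +
          (∑ w : Fin n → Letter, wwt (extw n w) p n) * (2 * bigH p) := by
        rw [Finset.mul_sum, Finset.sum_mul, ← Finset.sum_add_distrib]
        exact Finset.sum_congr rfl (fun w _ => by ring)
    _ ≤ 2 * (n * bigC p) + 1 * (2 * bigH p) := by
        rw [sum_wwt]
        exact add_le_add_left (by linarith [SQH_le hp n]) _
    _ ≤ (n + 1) * (2 * bigC p + 2 * bigH p) := by
        have h1 := bigC_nonneg p
        have h2 := bigH_nonneg p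
        have h3 : (0:ℝ) ≤ (n:ℝ) := Nat.cast_nonneg n
        nlinarith

/-- Vertical second moment bound. -/
lemma momentV (n : ℕ) :
    ∑ w : Fin n → Letter, wwt (extw n w) p n *
      (((wpos (extw n w) n 1 : ℤ) : ℝ) - n * (1/2))^2 ≤ ((n : ℝ) + 1) * 1 := by
  have hterm : ∀ w : Fin n → Letter,
      wwt (extw n w) p n * (((wpos (extw n w) n 1 : ℤ) : ℝ) - n * (1/2))^2
      = wwt (extw n w) p n * (ZV (extw n w) n)^2 := by
    intro w
    rw [ZV_eq p (extw n w) n]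
  have heq : ∑ w : Fin n → Letter, wwt (extw n w) p n *
      (((wpos (extw n w) n 1 : ℤ) : ℝ) - n * (1/2))^2
      = ∑ w : Fin n → Letter, wwt (extw n w) p n * (ZV (extw n w) n)^2 :=
    Finset.sum_congr rfl (fun w _ => hterm w)
  have hle := SQV_le hp n
  refine le_trans (le_of_eq heq) ?_
  linarith

end SQ

/-! ### Deterministic endgame: convergence from square-subsequence bounds -/

lemma tendsto_of_sq_approx (x : ℕ → ℝ) (v : ℝ)
    (lip : ∀ m n : ℕ, m ≤ n → |x n - x m| ≤ (n : ℝ) - (m : ℝ))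
    (hs : ∀ j : ℕ, ∀ᶠ M in Filter.atTop, |x ((M+1)^2) - (((M+1)^2 : ℕ) : ℝ) * v| ≤
        (((M+1)^2 : ℕ) : ℝ) / ((j : ℝ) + 1)) :
    Tendsto (fun n => x n / n) atTop (𝓝 v) := by
  rw [Metric.tendsto_atTop]
  intro ε hε
  obtain ⟨j, hj⟩ := exists_nat_one_div_lt (half_pos hε)
  obtain ⟨M0, hM0⟩ := Filter.eventually_atTop.mp (hs j)
  obtain ⟨M1, hM1⟩ := exists_nat_gt (4 * (1 + |v|) / ε)
  have hM1pos : (0:ℝ) < M1 := lt_of_le_of_lt (by positivity) hM1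
  refine ⟨(M0 + M1 + 2)^2, fun n hn => ?_⟩
  set s := Nat.sqrt n with hsdef
  have hs1 : s * s ≤ n := by have := Nat.sqrt_le' n; nlinarith [this]
  have hs2 : n < (s+1) * (s+1) := by have := Nat.lt_succ_sqrt' n; nlinarith [this]
  have hsge : M0 + M1 + 2 ≤ s := by
    by_contra hcon
    push_neg at hcon
    have h1 : s + 1 ≤ M0 + M1 + 2 := hcon
    have h2 : (s+1) * (s+1) ≤ (M0 + M1 + 2)^2 := by
      rw [pow_two]; exact Nat.mul_le_mul h1 h1
    omega
  have hspos : 1 ≤ s := by omega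
  set M := s - 1 with hMdef
  have hMs : M + 1 = s := by omega
  have hbound := hM0 M (by omega)
  rw [show (M+1)^2 = s * s by rw [hMs]; ring] at hbound
  -- real versions
  set S : ℝ := (s : ℝ) with hSdef
  set N : ℝ := (n : ℝ) with hNdef
  have hSpos : (0:ℝ) < S := by rw [hSdef]; exact_mod_cast hspos
  have hS1 : S * S ≤ N := by rw [hSdef, hNdef]; exact_mod_cast hs1
  have hNpos : (0:ℝ) < N := lt_of_lt_of_le (by positivity) hS1
  have hNS : N ≤ S * S + 2 * S := by
    have h3 : n ≤ s * s + 2 * s := by nlinarith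
    rw [hSdef, hNdef]; exact_mod_cast h3
  have hcast : (((s * s : ℕ)) : ℝ) = S * S := by push_cast; rfl
  have hxb : |x (s * s) - S * S * v| ≤ S * S * (1 / ((j:ℝ)+1)) := by
    rw [hcast] at hbound
    calc |x (s*s) - S * S * v| ≤ S * S / ((j:ℝ)+1) := hbound
      _ = S * S * (1 / ((j:ℝ)+1)) := by ring
  have hlip := lip (s * s) n hs1
  rw [hcast] at hlip
  set w : ℝ := 1 / ((j:ℝ)+1) with hwdef
  have hwpos : 0 ≤ w := by positivity
  have hw : w < ε / 2 := hj
  have hM1S : (M1 : ℝ) ≤ S := by rw [hSdef]; exact_mod_cast (by omega : M1 ≤ s)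
  have hεS : 4 * (1 + |v|) < ε * S := by
    have h4 : 4 * (1 + |v|) < ε * M1 := by
      rw [div_lt_iff₀ hε] at hM1
      linarith [hM1]
    calc 4 * (1 + |v|) < ε * M1 := h4
      _ ≤ ε * S := by exact mul_le_mul_of_nonneg_left hM1S hε.le
  -- triangle inequality
  have habs : |x n - N * v| ≤ (N - S * S) * (1 + |v|) + S * S * w := by
    have hh : x n - N * v = (x n - x (s*s)) + (x (s*s) - S * S * v) + (S * S - N) * v := by
      ring
    calc |x n - N * v| ≤ |x n - x (s*s)| + |x (s*s) - S*S*v| + |(S*S - N) * v| := by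
          rw [hh]; exact (abs_add_le _ _).trans (add_le_add_left (abs_add_le _ _) _)
      _ ≤ (N - S*S) + S*S*w + (N - S*S) * |v| := by
          refine add_le_add (add_le_add hlip hxb) ?_
          rw [abs_mul, abs_sub_comm]
          refine mul_le_mul_of_nonneg_right ?_ (abs_nonneg v)
          rw [abs_of_nonneg (by linarith)]
      _ = (N - S * S) * (1 + |v|) + S * S * w := by ring
  have e1 : |x n - N * v| ≤ 2 * S * (1 + |v|) + N * w := by
    have t1 : (N - S*S) * (1 + |v|) ≤ 2 * S * (1 + |v|) :=
      mul_le_mul_of_nonneg_right (by linarith) (by positivity)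
    have t2 : S * S * w ≤ N * w := mul_le_mul_of_nonneg_right hS1 hwpos
    linarith
  have e2 : 2 * S * (1 + |v|) < ε / 2 * N := by
    have t3 : (4 * (1 + |v|)) * S < (ε * S) * S := mul_lt_mul_of_pos_right hεS hSpos
    nlinarith
  have e3 : N * w < N * (ε / 2) := mul_lt_mul_of_pos_left hw hNpos
  have hfinal : |x n - N * v| < ε * N := by linarith
  have hquot : x n / N - v = (x n - N * v) / N := by field_simp
  rw [Real.dist_eq, hquot, abs_div, abs_of_pos hNpos, div_lt_iff₀ hNpos]
  linarith [hfinal]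

/-! ### Borel--Cantelli and final assembly -/

def Kc (p : ℝ) : ℝ := 2 * bigC p + 2 * bigH p + 1

lemma Kc_pos (p : ℝ) : 0 < Kc p := by
  have := bigC_nonneg p; have := bigH_nonneg p
  unfold Kc; linarith

def badE (i : Fin 2) (v : ℝ) (j : ℕ) (M : ℕ) : Set (RWSpace 2) :=
  {q : RWSpace 2 | (1/((j:ℝ)+1)) * (((M+1)^2 : ℕ) : ℝ) ≤
      |((q.2 ((M+1)^2) i : ℤ) : ℝ) - (((M+1)^2 : ℕ) : ℝ) * v|}

section Final

variable {p : ℝ} (hp : p ∈ Set.Ioo (0:ℝ) 1) {μ : Measure (EnvDist 2)}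
  (hμ1 : μ AR = ENNReal.ofReal p) (hμ2 : μ AL = ENNReal.ofReal (1 - p))
  {P : Measure (RWSpace 2)} (hP : IsRWRE μ P)

include hp hμ1 hμ2 hP

lemma P_badE (i : Fin 2) (v : ℝ)
    (hiv : (i = 0 ∧ v = mdrift p) ∨ (i = 1 ∧ v = 1/2)) (j M : ℕ) :
    P (badE i v j M) ≤ ENNReal.ofReal (((((M+1)^2 : ℕ) : ℝ) + 1) * Kc p /
      ((1/((j:ℝ)+1)) * (((M+1)^2 : ℕ) : ℝ))^2) := by
  refine P_bad_le hp hμ1 hμ2 hP i v (1/((j:ℝ)+1)) (by positivity) ((M+1)^2)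
    (by positivity) _ ?_
  have hC := bigC_nonneg p
  have hH := bigH_nonneg p
  have hn1 : (0:ℝ) ≤ (((M+1)^2 : ℕ) : ℝ) + 1 := by positivity
  rcases hiv with ⟨hi, hv⟩ | ⟨hi, hv⟩
  · subst hi; subst hv
    have := momentH hp ((M+1)^2)
    unfold Kc
    nlinarith
  · subst hi; subst hv
    have := momentV hp ((M+1)^2)
    unfold Kc
    nlinarith

omit hp hμ1 hμ2 hP in
lemma summable_badE_bound (hp : p ∈ Set.Ioo (0:ℝ) 1) (j : ℕ) :
    Summable (fun M : ℕ => ((((M+1)^2 : ℕ) : ℝ) + 1) * Kc p /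
      ((1/((j:ℝ)+1)) * (((M+1)^2 : ℕ) : ℝ))^2) := by
  have hK := Kc_pos p
  set J : ℝ := (j:ℝ) + 1 with hJ
  have hJpos : (0:ℝ) < J := by positivity
  set c : ℝ := 2 * Kc p * J^2 with hc
  have hbase : Summable (fun M : ℕ => 1/((M:ℝ))^2) :=
    Real.summable_one_div_nat_pow.mpr one_lt_two
  have hshift : Summable (fun M : ℕ => 1/(((M:ℝ)+1))^2) := by
    have h2 := (summable_nat_add_iff 1).mpr hbase
    refine h2.congr (fun M => ?_)
    push_cast
    ring
  have hcs : Summable (fun M : ℕ => c * (1/(((M:ℝ)+1))^2)) := hshift.mul_left c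
  refine Summable.of_nonneg_of_le (fun M => by positivity) (fun M => ?_) hcs
  set N : ℝ := (((M+1)^2 : ℕ) : ℝ) with hN
  have hNval : N = ((M:ℝ)+1)^2 := by rw [hN]; push_cast; ring
  have hN1 : (1:ℝ) ≤ N := by rw [hNval]; nlinarith [Nat.cast_nonneg (α := ℝ) M]
  have hNpos : (0:ℝ) < N := by linarith
  have hr : c * (1/(((M:ℝ)+1))^2) = 2 * Kc p * J^2 / N := by
    rw [hc, hNval]; ring
  rw [hr]
  rw [div_le_div_iff₀ (by positivity) hNpos]
  have hrhs : 2 * Kc p * J^2 * ((1/J) * N)^2 = 2 * Kc p * N^2 := by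
    field_simp
  rw [hrhs]
  nlinarith [mul_le_mul_of_nonneg_right (by linarith : N + 1 ≤ 2*N)
    (by positivity : (0:ℝ) ≤ Kc p * N)]

lemma P_limsup_badE (i : Fin 2) (v : ℝ)
    (hiv : (i = 0 ∧ v = mdrift p) ∨ (i = 1 ∧ v = 1/2)) (j : ℕ) :
    P (limsup (badE i v j) atTop) = 0 := by
  refine measure_limsup_atTop_eq_zero ?_
  have hle : ∑' M, P (badE i v j M) ≤
      ∑' M, ENNReal.ofReal (((((M+1)^2 : ℕ) : ℝ) + 1) * Kc p /
        ((1/((j:ℝ)+1)) * (((M+1)^2 : ℕ) : ℝ))^2) :=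
    ENNReal.tsum_le_tsum (fun M => P_badE hp hμ1 hμ2 hP i v hiv j M)
  have heq : ∑' M, ENNReal.ofReal (((((M+1)^2 : ℕ) : ℝ) + 1) * Kc p /
        ((1/((j:ℝ)+1)) * (((M+1)^2 : ℕ) : ℝ))^2) =
      ENNReal.ofReal (∑' M, ((((M+1)^2 : ℕ) : ℝ) + 1) * Kc p /
        ((1/((j:ℝ)+1)) * (((M+1)^2 : ℕ) : ℝ))^2) :=
    (ENNReal.ofReal_tsum_of_nonneg (fun M => div_nonneg (mul_nonneg (by positivity)
      (Kc_pos p).le) (sq_nonneg _)) (summable_badE_bound hp j)).symm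
  rw [heq] at hle
  exact ne_top_of_le_ne_top ENNReal.ofReal_ne_top hle

omit hp hμ1 hμ2 hP

lemma good_step {q : RWSpace 2} (hg : ∀ n, q ∈ goodSet n) (k : ℕ) :
    ∃ ℓ : Letter, q.2 (k+1) = q.2 k + vec ℓ := by
  obtain ⟨w, hw⟩ : ∃ w : Fin (k+1) → Letter, q ∈ cylSet (extw (k+1) w) (k+1) := by
    simpa [goodSet, Set.mem_iUnion] using hg (k+1)
  exact ⟨extw (k+1) w k, by
    rw [hw (k+1) le_rfl, hw k (Nat.le_succ k), wpos_succ]⟩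

lemma vec_coord_abs (ℓ : Letter) (i : Fin 2) : |((vec ℓ i : ℤ) : ℝ)| ≤ 1 := by
  fin_cases i <;> cases ℓ <;> norm_num

lemma good_lip {q : RWSpace 2} (hg : ∀ n, q ∈ goodSet n) (i : Fin 2) :
    ∀ m n : ℕ, m ≤ n → |((q.2 n i : ℤ) : ℝ) - ((q.2 m i : ℤ) : ℝ)| ≤ (n : ℝ) - (m : ℝ) := by
  intro m n hmn
  induction n, hmn using Nat.le_induction with
  | base => simp
  | succ n hmn ih =>
    obtain ⟨ℓ, hℓ⟩ := good_step hg n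
    have hstep : |((q.2 (n+1) i : ℤ) : ℝ) - ((q.2 n i : ℤ) : ℝ)| ≤ 1 := by
      rw [hℓ]
      have : (((q.2 n + vec ℓ) i : ℤ) : ℝ) - ((q.2 n i : ℤ) : ℝ) = ((vec ℓ i : ℤ) : ℝ) := by
        rw [Pi.add_apply]; push_cast; ring
      rw [this]
      exact vec_coord_abs ℓ i
    have htri : |((q.2 (n+1) i : ℤ) : ℝ) - ((q.2 m i : ℤ) : ℝ)| ≤
        |((q.2 (n+1) i : ℤ) : ℝ) - ((q.2 n i : ℤ) : ℝ)| +
        |((q.2 n i : ℤ) : ℝ) - ((q.2 m i : ℤ) : ℝ)| := by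
      have : ((q.2 (n+1) i : ℤ) : ℝ) - ((q.2 m i : ℤ) : ℝ) =
          (((q.2 (n+1) i : ℤ) : ℝ) - ((q.2 n i : ℤ) : ℝ)) +
          (((q.2 n i : ℤ) : ℝ) - ((q.2 m i : ℤ) : ℝ)) := by ring
      rw [this]; exact abs_add_le _ _
    push_cast
    push_cast at ih
    linarith

include hp hμ1 hμ2 hP

lemma main_conv :
    P {q : RWSpace 2 |
      Tendsto (fun n : ℕ => (n : ℝ)⁻¹ • (fun i => ((q.2 n i : ℤ) : ℝ))) atTop
        (𝓝 ![mdrift p, 1 / 2])} = 1 := by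
  classical
  set target := {q : RWSpace 2 |
      Tendsto (fun n : ℕ => (n : ℝ)⁻¹ • (fun i => ((q.2 n i : ℤ) : ℝ))) atTop
        (𝓝 ![mdrift p, 1 / 2])} with htarget
  set Nall : Set (RWSpace 2) := (⋃ n, (goodSet n)ᶜ) ∪
      ((⋃ j, limsup (badE (0 : Fin 2) (mdrift p) j) atTop) ∪
        ⋃ j, limsup (badE (1 : Fin 2) (1/2) j) atTop) with hNalldef
  have hNall0 : P Nall = 0 := by
    refine measure_union_null ?_ (measure_union_null ?_ ?_)
    · exact measure_iUnion_null (fun n => P_goodSet_compl hp hμ1 hμ2 hP n)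
    · exact measure_iUnion_null (fun j =>
        P_limsup_badE hp hμ1 hμ2 hP 0 (mdrift p) (Or.inl ⟨rfl, rfl⟩) j)
    · exact measure_iUnion_null (fun j =>
        P_limsup_badE hp hμ1 hμ2 hP 1 (1/2) (Or.inr ⟨rfl, rfl⟩) j)
  have hsub : Nallᶜ ⊆ target := by
    intro q hq
    rw [hNalldef, Set.compl_union, Set.compl_union] at hq
    obtain ⟨h1, h2, h3⟩ := hq
    simp only [Set.mem_compl_iff, Set.mem_iUnion, not_exists] at h1 h2 h3
    have hgood : ∀ n, q ∈ goodSet n := fun n => not_not.mp (h1 n)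
    have hlim : ∀ (i : Fin 2) (v : ℝ), (∀ j, q ∉ limsup (badE i v j) atTop) →
        Tendsto (fun n : ℕ => ((q.2 n i : ℤ) : ℝ) / n) atTop (𝓝 v) := by
      intro i v hnb
      refine tendsto_of_sq_approx _ _ (good_lip hgood i) (fun j => ?_)
      have h' : ∀ᶠ M in atTop, q ∉ badE i v j M := by
        rw [← Filter.not_frequently]
        exact fun hf => (hnb j) (mem_limsup_iff_frequently_mem.mpr hf)
      filter_upwards [h'] with M hM
      rw [badE, Set.mem_setOf_eq, not_le] at hM
      have : (1/((j:ℝ)+1)) * (((M+1)^2 : ℕ) : ℝ) = (((M+1)^2 : ℕ) : ℝ) / ((j:ℝ)+1) :=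
        one_div_mul_eq_div _ _
      linarith [hM]
    have hlim0 := hlim 0 (mdrift p) (fun j => h2 j)
    have hlim1 := hlim 1 (1/2) (fun j => h3 j)
    show Tendsto _ _ _
    rw [tendsto_pi_nhds]
    intro i
    have hi : i = 0 ∨ i = 1 := by fin_cases i <;> [exact Or.inl (by decide); exact Or.inr (by decide)]
    rcases hi with rfl | rfl
    · have heq : (fun n : ℕ => ((n : ℝ)⁻¹ • (fun i : Fin 2 => ((q.2 n i : ℤ) : ℝ))) 0) =
          fun n : ℕ => ((q.2 n 0 : ℤ) : ℝ) / n := by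
        funext n
        rw [Pi.smul_apply, smul_eq_mul, inv_mul_eq_div]
      rw [show (![mdrift p, 1/2] : Fin 2 → ℝ) 0 = mdrift p from rfl]
      exact heq ▸ hlim0
    · have heq : (fun n : ℕ => ((n : ℝ)⁻¹ • (fun i : Fin 2 => ((q.2 n i : ℤ) : ℝ))) 1) =
          fun n : ℕ => ((q.2 n 1 : ℤ) : ℝ) / n := by
        funext n
        rw [Pi.smul_apply, smul_eq_mul, inv_mul_eq_div]
      rw [show (![mdrift p, 1/2] : Fin 2 → ℝ) 1 = 1/2 from rfl]
      exact heq ▸ hlim1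
  have hprob : IsProbabilityMeasure P := hP.1
  have hcover : (Set.univ : Set (RWSpace 2)) ⊆ target ∪ Nall := by
    intro q _
    by_cases hq : q ∈ Nall
    · exact Or.inr hq
    · exact Or.inl (hsub hq)
  have h1 : (1:ℝ≥0∞) ≤ P target := by
    have hm : P Set.univ ≤ P (target ∪ Nall) := measure_mono hcover
    rw [measure_univ] at hm
    calc (1:ℝ≥0∞) ≤ P (target ∪ Nall) := hm
      _ ≤ P target + P Nall := measure_union_le _ _
      _ = P target := by rw [hNall0, add_zero]
  have h2 : P target ≤ 1 := by
    rw [← measure_univ (μ := P)]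
    exact measure_mono (Set.subset_univ _)
  exact le_antisymm h2 h1

end Final
end S19
end
/-- the uniform RWRE on `ℤ²` with `G_o = {↑, →}` w.p. `p` and
`G_o = {↑, ←}` w.p. `1-p` has `P`-a.s. velocity
`((2p-1)(p²-p+6)/(6(2-p)(1+p)), 1/2)`. -/
theorem stmt19 (p : ℝ) (hp : p ∈ Set.Ioo (0 : ℝ) 1)
    (μ : Measure (EnvDist 2))
    (hμ1 : μ {γ : EnvDist 2 |
        γ.prob (stepVec 2 (0, true)) = 1 / 2 ∧ γ.prob (stepVec 2 (1, true)) = 1 / 2 ∧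
        γ.prob (stepVec 2 (0, false)) = 0 ∧ γ.prob (stepVec 2 (1, false)) = 0} =
      ENNReal.ofReal p)
    (hμ2 : μ {γ : EnvDist 2 |
        γ.prob (stepVec 2 (0, true)) = 0 ∧ γ.prob (stepVec 2 (1, true)) = 1 / 2 ∧
        γ.prob (stepVec 2 (0, false)) = 1 / 2 ∧ γ.prob (stepVec 2 (1, false)) = 0} =
      ENNReal.ofReal (1 - p))
    (P : Measure (RWSpace 2)) (hP : IsRWRE μ P) :
    P {q : RWSpace 2 |
      Tendsto (fun n : ℕ => (n : ℝ)⁻¹ • (fun i => ((q.2 n i : ℤ) : ℝ))) atTop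
        (𝓝 ![(2 * p - 1) * (p ^ 2 - p + 6) / (6 * (2 - p) * (1 + p)), 1 / 2])} = 1 := by
  exact S19.main_conv hp hμ1 hμ2 hP
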